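/- arXiv:1304.1461 — 3 statements merged into one kernel-verified Lean document; each statement's English description precedes it below -/
import Mathlib

section
/- Let B = ⊕_{n≥0} B_n be a positively graded finite-dimensional algebra over a field k which is quasi-hereditary, and suppose B admits a heredity chain 0 = J_0 ⊆ J_1 ⊆ ⋯ ⊆ J_n = B in which each ideal has the form J_i = B·e_i·B for an idempotent e_i ∈ B_0. Then the subspaces J_{i,0} := B_0·e_i·B_0 form a heredity chain 0 = J_{0,0} ⊆ J_{1,0} ⊆ ⋯ ⊆ J_{n,0} = B_0 of the subalgebra B_0; in particular, B_0 is a quasi-hereditary algebra. -/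
noncomputable section

variable (k : Type) [Field k]

/-- A positive (ℕ-)grading on a `k`-algebra: `1 ∈ A₀` and `Aᵢ·Aⱼ ⊆ A_{i+j}`. -/
structure PosGrading (A : Type) [Ring A] [Algebra k A] : Type where
  piece : ℕ → Submodule k A
  isInternal : DirectSum.IsInternal piece
  one_mem : (1 : A) ∈ piece 0
  mul_mem : ∀ {i j : ℕ} {x y : A}, x ∈ piece i → y ∈ piece j → x * y ∈ piece (i + j)


end

noncomputable section

section QuotRing

variable (k : Type) [Field k] (A : Type) [Ring A] [Algebra k A]

/-- The quotient ring `A/I` of a ring by a two-sided ideal. -/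
abbrev QuotRing (I : TwoSidedIdeal A) : Type := I.ringCon.Quotient

/-- The quotient ring homomorphism `A → A/I`. -/
abbrev quotMap (I : TwoSidedIdeal A) : A →+* QuotRing A I := I.ringCon.mk'

instance (I : TwoSidedIdeal A) : Module A (QuotRing A I) :=
  Function.Surjective.module A (quotMap A I).toAddMonoidHom
    (fun x => Quotient.inductionOn' x fun a => ⟨a, rfl⟩) (fun _ _ => rfl)

instance (I : TwoSidedIdeal A) : Module k (QuotRing A I) :=
  Function.Surjective.module k (quotMap A I).toAddMonoidHom
    (fun x => Quotient.inductionOn' x fun a => ⟨a, rfl⟩) (fun _ _ => rfl)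

instance (I : TwoSidedIdeal A) : IsScalarTower k A (QuotRing A I) :=
  ⟨fun c a x => Quotient.inductionOn' x fun r => congrArg Quotient.mk'' (smul_assoc c a r)⟩

end QuotRing

section Heredity

variable (R : Type) [Ring R]

/-- A heredity ideal of a ring: an idempotent two-sided ideal `J` with `J·rad(R)·J = 0`
which is projective as a left module. -/
def IsHeredityIdeal (J : TwoSidedIdeal R) : Prop :=
  (∀ x ∈ J, x ∈ Submodule.span R {z : R | ∃ a ∈ J, ∃ b ∈ J, z = a * b}) ∧
  (∀ x ∈ J, ∀ r ∈ Ideal.jacobson (⊥ : Ideal R), ∀ y ∈ J, x * r * y = 0) ∧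
  Module.Projective R ↥(TwoSidedIdeal.asIdeal J)

/-- A heredity chain `0 = J 0 ⊆ J 1 ⊆ ⋯ ⊆ J n = R`. -/
def IsHeredityChain {n : ℕ} (J : Fin (n + 1) → TwoSidedIdeal R) : Prop :=
  J 0 = ⊥ ∧ J (Fin.last n) = ⊤ ∧ Monotone J ∧
  ∀ i : Fin n, IsHeredityIdeal (QuotRing R (J i.castSucc))
    (TwoSidedIdeal.span ((quotMap R (J i.castSucc)) '' (J i.succ : Set R)))

/-- A ring is quasi-hereditary if it admits a heredity chain. -/
def IsQuasiHereditary : Prop :=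
  ∃ (n : ℕ) (J : Fin (n + 1) → TwoSidedIdeal R), IsHeredityChain R J

end Heredity
section DegZero

variable (k : Type) [Field k] {B : Type} [Ring B] [Algebra k B]

/-- The degree-zero subalgebra `B₀` of a positively graded algebra. -/
def degZero (gb : PosGrading k B) : Subalgebra k B :=
  (gb.piece 0).toSubalgebra gb.one_mem fun _ _ hx hy => gb.mul_mem hx hy

end DegZero


section QHAux

section AuxRing
variable {R S : Type*} [Ring R] [Ring S]

lemma QH.isUnit_of_left_right {a u b : R} (hl : a * u = 1) (hr : u * b = 1) : IsUnit u := by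
  have hab : a = b := by
    calc a = a * (u * b) := by rw [hr, mul_one]
    _ = (a * u) * b := by rw [mul_assoc]
    _ = b := by rw [hl, one_mul]
  exact isUnit_iff_exists.mpr ⟨a, by rw [hab]; exact hr, hl⟩

lemma QH.isUnit_one_add_swap {a b : R} (h : IsUnit (1 + a * b)) : IsUnit (1 + b * a) := by
  obtain ⟨w, hw1, hw2⟩ := isUnit_iff_exists.mp h
  refine isUnit_iff_exists.mpr ⟨1 - b * w * a, ?_, ?_⟩
  · calc (1 + b * a) * (1 - b * w * a)
        = 1 + b * a - b * ((1 + a * b) * w) * a := by noncomm_ring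
    _ = 1 := by rw [hw1]; noncomm_ring
  · calc (1 - b * w * a) * (1 + b * a)
        = 1 + b * a - b * (w * (1 + a * b)) * a := by noncomm_ring
    _ = 1 := by rw [hw2]; noncomm_ring

lemma QH.mem_jacobson_bot {x : R} :
    x ∈ Ideal.jacobson (⊥ : Ideal R) ↔ ∀ y : R, IsUnit (y * x + 1) := by
  rw [Ideal.mem_jacobson_iff]
  constructor
  · intro h y
    obtain ⟨z, hz⟩ := h y
    rw [Ideal.mem_bot] at hz
    have hz1 : z * (y * x + 1) = 1 := by
      have h1 : z * y * x + z = 1 := by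
        linear_combination (norm := noncomm_ring) hz
      calc z * (y * x + 1) = z * y * x + z := by noncomm_ring
      _ = 1 := h1
    -- find left inverse of z
    obtain ⟨w, hw⟩ := h (-(z * y))
    rw [Ideal.mem_bot] at hw
    have hw1 : w * z = 1 := by
      have h2 : w * (-(z * y)) * x + w = 1 := by
        linear_combination (norm := noncomm_ring) hw
      have h3 : z = -(z * y) * x + 1 := by
        linear_combination (norm := noncomm_ring) hz
      calc w * z = w * (-(z * y) * x + 1) := by rw [← h3]
      _ = w * (-(z * y)) * x + w := by noncomm_ring
      _ = 1 := h2
    have huz : (y * x + 1) * z = 1 := by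
      have : w = y * x + 1 := by
        calc w = w * (z * (y * x + 1)) := by rw [hz1, mul_one]
        _ = (w * z) * (y * x + 1) := by rw [mul_assoc]
        _ = y * x + 1 := by rw [hw1, one_mul]
      rw [← this]; exact hw1
    exact isUnit_iff_exists.mpr ⟨z, huz, hz1⟩
  · intro h y
    obtain ⟨v, _, hv2⟩ := isUnit_iff_exists.mp (h y)
    refine ⟨v, ?_⟩
    rw [Ideal.mem_bot]
    linear_combination (norm := noncomm_ring) hv2

lemma QH.jacobson_bot_mul_mem {x c : R} (hx : x ∈ Ideal.jacobson (⊥ : Ideal R)) :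
    x * c ∈ Ideal.jacobson (⊥ : Ideal R) := by
  rw [QH.mem_jacobson_bot] at hx ⊢
  intro y
  have h1 : IsUnit (1 + c * (y * x)) := by
    have := hx (c * y)
    rw [add_comm] at this
    convert this using 2
    noncomm_ring
  have h2 := QH.isUnit_one_add_swap h1
  rw [add_comm] at h2
  convert h2 using 2
  noncomm_ring

lemma QH.jacobson_bot_mem_mul {x c : R} (hx : x ∈ Ideal.jacobson (⊥ : Ideal R)) :
    c * x ∈ Ideal.jacobson (⊥ : Ideal R) := by
  simpa [smul_eq_mul] using (Ideal.jacobson (⊥ : Ideal R)).smul_mem c hx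

lemma QH.isUnit_lift (ι : S →+* R) (τ : R →+* S) (hτι : ∀ s, τ (ι s) = s)
    (hker : ∀ x : R, τ x = 0 → IsNilpotent x) {u : R} (h : IsUnit (τ u)) : IsUnit u := by
  obtain ⟨v', hv1, hv2⟩ := isUnit_iff_exists.mp h
  set w := ι v' with hw
  have h1 : τ (u * w - 1) = 0 := by
    rw [map_sub, map_mul, hw, hτι, map_one, hv1, sub_self]
  have h2 : τ (w * u - 1) = 0 := by
    rw [map_sub, map_mul, hw, hτι, map_one, hv2, sub_self]
  have hu1 : IsUnit (u * w) := by
    have := (hker _ h1).isUnit_add_one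
    simpa using this
  have hu2 : IsUnit (w * u) := by
    have := (hker _ h2).isUnit_add_one
    simpa using this
  obtain ⟨p, hp1, _⟩ := isUnit_iff_exists.mp hu1
  obtain ⟨q, _, hq2⟩ := isUnit_iff_exists.mp hu2
  refine QH.isUnit_of_left_right (a := q * w) (b := w * p) ?_ ?_
  · rw [mul_assoc]; exact hq2
  · rw [← mul_assoc]; exact hp1

lemma QH.jacobson_lift (ι : S →+* R) (τ : R →+* S) (hτι : ∀ s, τ (ι s) = s)
    (hker : ∀ x : R, τ x = 0 → IsNilpotent x) {x : S}
    (hx : x ∈ Ideal.jacobson (⊥ : Ideal S)) : ι x ∈ Ideal.jacobson (⊥ : Ideal R) := by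
  rw [QH.mem_jacobson_bot] at hx ⊢
  intro y
  apply QH.isUnit_lift ι τ hτι hker
  rw [map_add, map_mul, map_one, hτι]
  exact hx (τ y)

end AuxRing


section AuxSpan
variable {R S : Type*} [Ring R] [Ring S]

lemma QH.span_singleton_le {g : R} {I : TwoSidedIdeal R} (hg : g ∈ I) :
    TwoSidedIdeal.span {g} ≤ I := fun x hx =>
  TwoSidedIdeal.mem_span_iff.mp hx I (Set.singleton_subset_iff.mpr hg)

lemma QH.map_span_singleton_mem (f : R →+* S) {g x : R}
    (hx : x ∈ TwoSidedIdeal.span {g}) {I : TwoSidedIdeal S} (hg : f g ∈ I) : f x ∈ I := by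
  have h := QH.span_singleton_le (I := TwoSidedIdeal.comap f I)
    ((TwoSidedIdeal.mem_comap f).mpr hg) hx
  exact (TwoSidedIdeal.mem_comap f).mp h

lemma QH.span_image_span (f : R →+* S) (g : R) :
    TwoSidedIdeal.span (f '' (TwoSidedIdeal.span {g} : Set R)) =
      TwoSidedIdeal.span {f g} := by
  apply le_antisymm
  · intro x hx
    refine TwoSidedIdeal.mem_span_iff.mp hx _ ?_
    rintro _ ⟨y, hy, rfl⟩
    exact QH.map_span_singleton_mem f hy (TwoSidedIdeal.subset_span rfl)
  · exact QH.span_singleton_le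
      (TwoSidedIdeal.subset_span ⟨g, TwoSidedIdeal.subset_span rfl, rfl⟩)

lemma QH.span_idem_cond1 {f : R} (hf : IsIdempotentElem f) :
    ∀ x ∈ TwoSidedIdeal.span {f},
      x ∈ Submodule.span R {z : R | ∃ a ∈ TwoSidedIdeal.span {f},
        ∃ b ∈ TwoSidedIdeal.span {f}, z = a * b} := by
  set Jf := TwoSidedIdeal.span {f} with hJf
  set T : Set R := {z : R | ∃ a ∈ Jf, ∃ b ∈ Jf, z = a * b} with hT
  have hmulr : ∀ x ∈ Submodule.span R T, ∀ r : R, x * r ∈ Submodule.span R T := by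
    intro x hx
    induction hx using Submodule.span_induction with
    | mem z hz =>
      intro r
      obtain ⟨a, ha, b, hb, rfl⟩ := hz
      rw [mul_assoc]
      exact Submodule.subset_span ⟨a, ha, b * r, Jf.mul_mem_right b r hb, rfl⟩
    | zero => intro r; rw [zero_mul]; exact Submodule.zero_mem _
    | add x y _ _ hx hy => intro r; rw [add_mul]; exact Submodule.add_mem _ (hx r) (hy r)
    | smul c x _ hx => intro r; rw [smul_mul_assoc]; exact Submodule.smul_mem _ c (hx r)
  let T' : TwoSidedIdeal R := TwoSidedIdeal.mk' (Submodule.span R T)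
    (Submodule.zero_mem _) (fun h1 h2 => Submodule.add_mem _ h1 h2)
    (fun h => Submodule.neg_mem _ h)
    (fun {x y} hy => by simpa [smul_eq_mul] using Submodule.smul_mem _ x hy)
    (fun {x y} hx => hmulr x hx y)
  intro x hx
  have hfT : f ∈ T' := by
    rw [TwoSidedIdeal.mem_mk']
    exact Submodule.subset_span
      ⟨f, TwoSidedIdeal.subset_span rfl, f, TwoSidedIdeal.subset_span rfl, hf.symm⟩
  have := QH.span_singleton_le (I := T') hfT hx
  rwa [TwoSidedIdeal.mem_mk'] at this

lemma QH.cond2_of_sandwich {f : S}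
    (hkey : ∀ r ∈ Ideal.jacobson (⊥ : Ideal S), f * r * f = 0) :
    ∀ x ∈ TwoSidedIdeal.span {f}, ∀ r ∈ Ideal.jacobson (⊥ : Ideal S),
      ∀ y ∈ TwoSidedIdeal.span {f}, x * r * y = 0 := by
  have inner : ∀ y ∈ TwoSidedIdeal.span {f},
      ∀ r ∈ Ideal.jacobson (⊥ : Ideal S), f * r * y = 0 := by
    let I2 : TwoSidedIdeal S := TwoSidedIdeal.mk'
      {y : S | ∀ r' ∈ Ideal.jacobson (⊥ : Ideal S), f * r' * y = 0}
      (fun r' _ => by rw [mul_zero])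
      (fun {a b} ha hb r' hr' => by rw [mul_add, ha r' hr', hb r' hr', add_zero])
      (fun {a} ha r' hr' => by rw [mul_neg, ha r' hr', neg_zero])
      (fun {x y} hy r' hr' => by
        have h1 : f * (r' * x) * y = 0 := hy _ (QH.jacobson_bot_mul_mem hr')
        calc f * r' * (x * y) = f * (r' * x) * y := by noncomm_ring
        _ = 0 := h1)
      (fun {x y} hx r' hr' => by
        have h1 : f * r' * x = 0 := hx r' hr'
        calc f * r' * (x * y) = (f * r' * x) * y := by noncomm_ring
        _ = 0 := by rw [h1, zero_mul])
    intro y hy r hr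
    have hfI2 : f ∈ I2 := by
      rw [TwoSidedIdeal.mem_mk']
      intro r' hr'
      exact hkey r' hr'
    have := QH.span_singleton_le (I := I2) hfI2 hy
    rw [TwoSidedIdeal.mem_mk'] at this
    exact this r hr
  intro x hx r hr y hy
  let I1 : TwoSidedIdeal S := TwoSidedIdeal.mk'
    {x : S | ∀ r' ∈ Ideal.jacobson (⊥ : Ideal S), ∀ y ∈ TwoSidedIdeal.span {f},
      x * r' * y = 0}
    (fun r' _ y _ => by rw [zero_mul, zero_mul])
    (fun {a b} ha hb r' hr' y hy => by
      rw [add_mul, add_mul, ha r' hr' y hy, hb r' hr' y hy, add_zero])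
    (fun {a} ha r' hr' y hy => by rw [neg_mul, neg_mul, ha r' hr' y hy, neg_zero])
    (fun {q x} hx r' hr' y hy => by
      have h1 : x * r' * y = 0 := hx r' hr' y hy
      calc q * x * r' * y = q * (x * r' * y) := by noncomm_ring
      _ = 0 := by rw [h1, mul_zero])
    (fun {x q} hx r' hr' y hy => by
      have h1 : x * (q * r') * y = 0 := hx _ (QH.jacobson_bot_mem_mul hr') y hy
      calc x * q * r' * y = x * (q * r') * y := by noncomm_ring
      _ = 0 := h1)
  have hfI1 : f ∈ I1 := by
    rw [TwoSidedIdeal.mem_mk']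
    intro r' hr' y hy
    exact inner y hy r' hr'
  have := QH.span_singleton_le (I := I1) hfI1 hx
  rw [TwoSidedIdeal.mem_mk'] at this
  exact this r hr y hy

end AuxSpan

section AuxProj
variable {R S : Type*} [Ring R] [Ring S]

lemma QH.projective_transfer (ι : S →+* R) (τ : R →+* S) (hτι : ∀ s, τ (ι s) = s)
    (J : TwoSidedIdeal R) (J₀ : TwoSidedIdeal S)
    (hι : ∀ s : S, s ∈ J₀ → ι s ∈ J) (hτ : ∀ r : R, r ∈ J → τ r ∈ J₀)
    (hproj : Module.Projective R (TwoSidedIdeal.asIdeal J)) :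
    Module.Projective S (TwoSidedIdeal.asIdeal J₀) := by
  obtain ⟨s, hs⟩ := hproj.out
  set M := ↥(TwoSidedIdeal.asIdeal J) with hM
  set M₀ := ↥(TwoSidedIdeal.asIdeal J₀) with hM₀
  let ιM : M₀ → M := fun x => ⟨ι x,
    TwoSidedIdeal.mem_asIdeal.mpr (hι _ (TwoSidedIdeal.mem_asIdeal.mp x.2))⟩
  let τM : M → M₀ := fun y => ⟨τ y,
    TwoSidedIdeal.mem_asIdeal.mpr (hτ _ (TwoSidedIdeal.mem_asIdeal.mp y.2))⟩
  let tr : (M →₀ R) → (M₀ →₀ S) := fun g =>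
    Finsupp.mapDomain τM (g.mapRange τ (map_zero τ))
  have key : ∀ g : M →₀ R,
      ((Finsupp.linearCombination S (id : M₀ → M₀)) (tr g) : S)
        = τ ((Finsupp.linearCombination R (id : M → M) g : M) : R) := by
    intro g
    induction g using Finsupp.induction_linear with
    | zero => simp [tr]
    | add f g hf hg =>
      have htr : tr (f + g) = tr f + tr g := by
        show Finsupp.mapDomain τM ((f + g).mapRange τ (map_zero τ)) = _
        rw [Finsupp.mapRange_add (hf' := map_add τ), Finsupp.mapDomain_add]
      calc ((Finsupp.linearCombination S (id : M₀ → M₀)) (tr (f + g)) : S)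
          = ↑((Finsupp.linearCombination S (id : M₀ → M₀)) (tr f)
              + (Finsupp.linearCombination S (id : M₀ → M₀)) (tr g)) := by
            rw [htr, map_add]
      _ = ((Finsupp.linearCombination S (id : M₀ → M₀)) (tr f) : S)
            + ((Finsupp.linearCombination S (id : M₀ → M₀)) (tr g) : S) := rfl
      _ = τ ((Finsupp.linearCombination R (id : M → M) f : M) : R)
            + τ ((Finsupp.linearCombination R (id : M → M) g : M) : R) := by rw [hf, hg]
      _ = τ (((Finsupp.linearCombination R (id : M → M)) (f + g) : M) : R) := by
            rw [map_add, Submodule.coe_add, map_add]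
    | single y r =>
      simp only [tr, Finsupp.mapRange_single, Finsupp.mapDomain_single,
        Finsupp.linearCombination_single, id_eq]
      rw [Submodule.coe_smul, Submodule.coe_smul, smul_eq_mul, smul_eq_mul, map_mul]
  have hιMadd : ∀ x y : M₀, ιM (x + y) = ιM x + ιM y := by
    intro x y; apply Subtype.ext
    show ι ↑(x + y) = ι ↑x + ι ↑y
    rw [Submodule.coe_add, map_add]
  have hιMsmul : ∀ (c : S) (x : M₀), ιM (c • x) = ι c • ιM x := by
    intro c x; apply Subtype.ext
    show ι ↑(c • x) = ι c * ι ↑x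
    rw [Submodule.coe_smul, smul_eq_mul, map_mul]
  let tmap : M₀ →ₗ[S] (M₀ →₀ S) := {
    toFun := fun x => tr (s (ιM x))
    map_add' := by
      intro x y
      rw [hιMadd, map_add]
      show Finsupp.mapDomain τM ((s (ιM x) + s (ιM y)).mapRange τ (map_zero τ)) = _
      rw [Finsupp.mapRange_add (hf' := map_add τ), Finsupp.mapDomain_add]
    map_smul' := by
      intro c x
      rw [hιMsmul, map_smul]
      simp only [RingHom.id_apply]
      have h2 : (ι c • s (ιM x)).mapRange τ (map_zero τ)
          = c • (s (ιM x)).mapRange τ (map_zero τ) := by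
        ext a
        simp only [Finsupp.mapRange_apply, Finsupp.smul_apply, smul_eq_mul, map_mul, hτι]
      simp only [tr, h2, Finsupp.mapDomain_smul] }
  refine ⟨⟨tmap, ?_⟩⟩
  intro x
  apply Subtype.ext
  have h3 := key (s (ιM x))
  have h4 : ((Finsupp.linearCombination R (id : M → M)) (s (ιM x))) = ιM x := hs (ιM x)
  rw [h4] at h3
  calc ((Finsupp.linearCombination S (id : M₀ → M₀)) (tmap x) : S)
      = τ ((ιM x : M) : R) := h3
  _ = (x : S) := hτι _

end AuxProj

section QuotLiftAux

variable {A A' : Type} [Ring A] [Ring A']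

lemma QH.quotMap_surjective (I : TwoSidedIdeal A) (u : QuotRing A I) :
    ∃ a : A, quotMap A I a = u :=
  Quotient.inductionOn' u fun a => ⟨a, rfl⟩

lemma QH.quotMap_eq_iff (I : TwoSidedIdeal A) (a b : A) :
    quotMap A I a = quotMap A I b ↔ a - b ∈ I := by
  rw [show (quotMap A I a = quotMap A I b) ↔ I.ringCon a b from RingCon.eq _, I.rel_iff]

lemma QH.quotMap_eq_zero_iff (I : TwoSidedIdeal A) (a : A) :
    quotMap A I a = 0 ↔ a ∈ I := by
  have h0 : (0 : QuotRing A I) = quotMap A I 0 := (map_zero _).symm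
  rw [h0, QH.quotMap_eq_iff, sub_zero]

def QH.quotLift (f : A →+* A') (I : TwoSidedIdeal A) (I' : TwoSidedIdeal A')
    (h : ∀ x ∈ I, f x ∈ I') : QuotRing A I →+* QuotRing A' I' where
  toFun := fun x => Quotient.liftOn' x (fun a => quotMap A' I' (f a)) (by
    intro a b hab
    have h1 : a - b ∈ I := (I.rel_iff a b).mp hab
    have h2 : f a - f b ∈ I' := by rw [← map_sub]; exact h _ h1
    exact (QH.quotMap_eq_iff I' (f a) (f b)).mpr h2)
  map_one' := by
    show quotMap A' I' (f 1) = 1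
    rw [map_one, map_one]
  map_mul' := fun x y => Quotient.inductionOn₂' x y fun a b => by
    show quotMap A' I' (f (a * b)) = quotMap A' I' (f a) * quotMap A' I' (f b)
    rw [map_mul, map_mul]
  map_zero' := by
    show quotMap A' I' (f 0) = 0
    rw [map_zero, map_zero]
  map_add' := fun x y => Quotient.inductionOn₂' x y fun a b => by
    show quotMap A' I' (f (a + b)) = quotMap A' I' (f a) + quotMap A' I' (f b)
    rw [map_add, map_add]

lemma QH.quotLift_mk (f : A →+* A') (I : TwoSidedIdeal A) (I' : TwoSidedIdeal A')
    (h : ∀ x ∈ I, f x ∈ I') (a : A) :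
    QH.quotLift f I I' h (quotMap A I a) = quotMap A' I' (f a) := rfl

end QuotLiftAux

section RhoAux
variable {k : Type} [Field k] {B : Type} [Ring B] [Algebra k B]

lemma QH.exists_rho [FiniteDimensional k B] (gb : PosGrading k B) :
    ∃ (ρ : B →+* ↥(degZero k gb)) (d : ℕ),
      (∀ x : ↥(degZero k gb), ρ ↑x = x) ∧ (∀ n : B, ρ n = 0 → n ^ d = 0) := by
  classical
  letI : SetLike.GradedOne gb.piece := ⟨gb.one_mem⟩
  letI : SetLike.GradedMul gb.piece := ⟨fun {_ _ _ _} hx hy => gb.mul_mem hx hy⟩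
  letI : SetLike.GradedMonoid gb.piece := {}
  letI : DirectSum.Decomposition gb.piece := gb.isInternal.chooseDecomposition
  letI : GradedRing gb.piece := {}
  set ρ' : B →+* B := GradedRing.projZeroRingHom gb.piece with hρ'
  have hρ'mem : ∀ x : B, ρ' x ∈ gb.piece 0 := fun x => SetLike.coe_mem _
  have hρ'same : ∀ x : B, x ∈ gb.piece 0 → ρ' x = x := fun x hx =>
    DirectSum.decompose_of_mem_same gb.piece hx
  let ρ : B →+* ↥(degZero k gb) := ρ'.codRestrict (degZero k gb).toSubring hρ'mem
  -- finiteness of the grading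
  have hind := DirectSum.IsInternal.submodule_iSupIndep gb.isInternal
  have hfin : Set.Finite {i : ℕ | gb.piece i ≠ ⊥} :=
    WellFoundedGT.finite_ne_bot_of_iSupIndep hind
  obtain ⟨D, hD⟩ := hfin.bddAbove
  have hbot : ∀ i : ℕ, D < i → gb.piece i = ⊥ := by
    intro i hi
    by_contra h
    exact absurd (hD h) (not_le.mpr hi)
  -- the positive-degree filtration
  set P : ℕ → Submodule k B := fun m => ⨆ (i : {j : ℕ // m ≤ j}), gb.piece i with hP
  have hPmul : ∀ (a b : ℕ) (x y : B), x ∈ P a → y ∈ P b → x * y ∈ P (a + b) := by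
    intro a b x y hx hy
    refine Submodule.iSup_induction (motive := fun x => x * y ∈ P (a + b)) _ hx ?_ ?_ ?_
    · intro i x hxi
      refine Submodule.iSup_induction (motive := fun y => x * y ∈ P (a + b)) _ hy ?_ ?_ ?_
      · intro j y hyj
        have : x * y ∈ gb.piece ((i : ℕ) + (j : ℕ)) := gb.mul_mem hxi hyj
        have hle : gb.piece ((i : ℕ) + (j : ℕ)) ≤ P (a + b) :=
          le_iSup (fun (t : {j : ℕ // a + b ≤ j}) => gb.piece (t : ℕ))
            ⟨(i : ℕ) + (j : ℕ), add_le_add i.2 j.2⟩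
        exact hle this
      · show x * 0 ∈ P (a + b)
        rw [mul_zero]; exact Submodule.zero_mem _
      · intro y z hy hz
        show x * (y + z) ∈ P (a + b)
        rw [mul_add]; exact Submodule.add_mem _ hy hz
    · show (0 : B) * y ∈ P (a + b)
      rw [zero_mul]; exact Submodule.zero_mem _
    · intro x z hx hz
      show (x + z) * y ∈ P (a + b)
      rw [add_mul]; exact Submodule.add_mem _ hx hz
  have hPbot : P (D + 1) = ⊥ := by
    rw [hP]
    apply le_bot_iff.mp
    apply iSup_le
    intro i
    rw [hbot i (Nat.lt_of_lt_of_le (Nat.lt_succ_self D) i.2)]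
  have hmem1 : ∀ x : B, ρ' x = 0 → x ∈ P 1 := by
    intro x hx
    have hsum := DirectSum.sum_support_decompose gb.piece x
    rw [← hsum]
    apply Submodule.sum_mem
    intro i hi
    rcases Nat.eq_zero_or_pos i with h0 | h1
    · subst h0
      have : (DirectSum.decompose gb.piece x 0 : B) = 0 := by
        have : ρ' x = (DirectSum.decompose gb.piece x 0 : B) := rfl
        rw [← this, hx]
      rw [this]
      exact Submodule.zero_mem _
    · have : gb.piece i ≤ P 1 :=
        le_iSup (fun (t : {j : ℕ // 1 ≤ j}) => gb.piece (t : ℕ)) ⟨i, h1⟩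
      exact this (SetLike.coe_mem _)
  refine ⟨ρ, D + 1, ?_, ?_⟩
  · intro x
    apply Subtype.ext
    exact hρ'same _ x.2
  · intro m hm
    have hm' : ρ' m = 0 := by
      have := congrArg (Subtype.val) hm
      exact this
    have h1 : m ∈ P 1 := hmem1 m hm'
    have hpow : ∀ p : ℕ, m ^ (p + 1) ∈ P (p + 1) := by
      intro p
      induction p with
      | zero => simpa using h1
      | succ q ih =>
        have := hPmul (q + 1) 1 _ _ ih h1
        rw [pow_succ]
        exact this
    have := hpow D
    rw [hPbot] at this
    simpa using this

end RhoAux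

section MasterAux
variable {R S : Type} [Ring R] [Ring S]

lemma QH.heredity_transfer (ι : S →+* R) (τ : R →+* S)
    (hτι : ∀ s, τ (ι s) = s) (hker : ∀ x : R, τ x = 0 → IsNilpotent x)
    {f₀ : S} (hf₀ : IsIdempotentElem f₀)
    (J : TwoSidedIdeal R) (hfJ : ι f₀ ∈ J)
    (hτJ : ∀ r ∈ J, τ r ∈ TwoSidedIdeal.span {f₀})
    (hrad : ∀ x ∈ J, ∀ r ∈ Ideal.jacobson (⊥ : Ideal R), ∀ y ∈ J, x * r * y = 0)
    (hproj : Module.Projective R (TwoSidedIdeal.asIdeal J)) :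
    IsHeredityIdeal S (TwoSidedIdeal.span {f₀}) := by
  refine ⟨QH.span_idem_cond1 hf₀, QH.cond2_of_sandwich ?_,
    QH.projective_transfer ι τ hτι J _
      (fun s hs => QH.map_span_singleton_mem ι hs hfJ) hτJ hproj⟩
  intro r hr
  have h1 : ι f₀ * ι r * ι f₀ = 0 :=
    hrad _ hfJ _ (QH.jacobson_lift ι τ hτι hker hr) _ hfJ
  have h2 := congrArg τ h1
  rw [map_mul, map_mul, hτι, hτι, map_zero] at h2
  exact h2

end MasterAux
end QHAux

/-- If a positively graded finite-dimensional algebra `B` has a heredity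
chain with `J i = B·eᵢ·B` for idempotents `eᵢ ∈ B₀`, then the ideals `B₀·eᵢ·B₀` form a
heredity chain of `B₀`; in particular `B₀` is quasi-hereditary. -/
theorem stmt0 (k B : Type) [Field k] [Ring B] [Algebra k B] [FiniteDimensional k B]
    (gb : PosGrading k B) (n : ℕ) (J : Fin (n + 1) → TwoSidedIdeal B)
    (hchain : IsHeredityChain B J)
    (e : Fin n → B) (hidem : ∀ i, IsIdempotentElem (e i)) (he : ∀ i, e i ∈ gb.piece 0)
    (hJ : ∀ i : Fin n, J i.succ = TwoSidedIdeal.span {e i}) :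
    IsHeredityChain ↥(degZero k gb)
      (fun i : Fin (n + 1) =>
        Fin.cases ⊥ (fun j : Fin n =>
          TwoSidedIdeal.span {(⟨e j, he j⟩ : ↥(degZero k gb))}) i) ∧
    IsQuasiHereditary ↥(degZero k gb) := by
  classical
  obtain ⟨ρ, d, hρid, hρnil⟩ := QH.exists_rho gb
  set F : Fin (n + 1) → TwoSidedIdeal ↥(degZero k gb) :=
      (fun i : Fin (n + 1) =>
        Fin.cases ⊥ (fun j : Fin n =>
          TwoSidedIdeal.span {(⟨e j, he j⟩ : ↥(degZero k gb))}) i) with hF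
  let v : ↥(degZero k gb) →+* B := ((degZero k gb).val : _ →ₐ[k] B).toRingHom
  obtain ⟨hc0, hcTop, hcMono, hcHered⟩ := hchain
  have hρe : ∀ j : Fin n, ρ (e j) = ⟨e j, he j⟩ := fun j => hρid ⟨e j, he j⟩
  have hρspan : ∀ (j : Fin n) (x : B), x ∈ TwoSidedIdeal.span {e j} →
      ρ x ∈ TwoSidedIdeal.span {(⟨e j, he j⟩ : ↥(degZero k gb))} := by
    intro j x hx
    refine QH.map_span_singleton_mem ρ hx ?_
    rw [hρe j]
    exact TwoSidedIdeal.subset_span rfl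
  have hvspan : ∀ (j : Fin n) (x : ↥(degZero k gb)),
      x ∈ TwoSidedIdeal.span {(⟨e j, he j⟩ : ↥(degZero k gb))} →
      (x : B) ∈ TwoSidedIdeal.span {e j} := by
    intro j x hx
    refine QH.map_span_singleton_mem v hx ?_
    show (e j : B) ∈ TwoSidedIdeal.span {e j}
    exact TwoSidedIdeal.subset_span rfl
  have hF0 : F 0 = ⊥ := by simp only [hF, Fin.cases_zero]
  have hFsucc : ∀ j : Fin n, F j.succ
      = TwoSidedIdeal.span {(⟨e j, he j⟩ : ↥(degZero k gb))} := by
    intro j; rw [hF]; exact Fin.cases_succ _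
  have hmain : IsHeredityChain ↥(degZero k gb) F := by
    refine ⟨hF0, ?_, ?_, ?_⟩
    · -- top
      rcases Fin.eq_zero_or_eq_succ (Fin.last n) with hl | ⟨j, hl⟩
      · rw [hl, hF0]
        rw [hl, hc0] at hcTop
        have h1 : (1 : B) = 0 := by
          have h2 : (1 : B) ∈ (⊥ : TwoSidedIdeal B) := by
            rw [hcTop]; exact TwoSidedIdeal.mem_top _
          rwa [TwoSidedIdeal.mem_bot] at h2
        apply TwoSidedIdeal.eq_top
        rw [TwoSidedIdeal.mem_bot]
        apply Subtype.ext
        simpa using h1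
      · rw [hl, hFsucc j]
        apply TwoSidedIdeal.eq_top
        have h1 : (1 : B) ∈ J (Fin.last n) := by rw [hcTop]; exact TwoSidedIdeal.mem_top _
        rw [hl, hJ j] at h1
        have h2 := hρspan j 1 h1
        rwa [map_one] at h2
    · -- monotone
      intro a b hab
      rcases Fin.eq_zero_or_eq_succ a with ha | ⟨ja, ha⟩
      · rw [ha, hF0]; exact bot_le
      · rcases Fin.eq_zero_or_eq_succ b with hb | ⟨jb, hb⟩
        · exfalso
          rw [ha, hb] at hab
          exact Fin.succ_ne_zero ja (Fin.le_zero_iff.mp hab)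
        · rw [ha, hb, hFsucc ja, hFsucc jb]
          have hmB : J ja.succ ≤ J jb.succ := by
            apply hcMono; rw [← ha, ← hb]; exact hab
          have hel : e ja ∈ TwoSidedIdeal.span {e jb} := by
            rw [← hJ jb]
            exact hmB (by rw [hJ ja]; exact TwoSidedIdeal.subset_span rfl)
          have h2 := hρspan jb (e ja) hel
          rw [hρe ja] at h2
          exact QH.span_singleton_le h2
    · -- heredity in quotients
      intro i
      have hKK₀ : ∀ x : ↥(degZero k gb), x ∈ F i.castSucc → (x : B) ∈ J i.castSucc := by
        rcases Fin.eq_zero_or_eq_succ i.castSucc with h0 | ⟨j, hj⟩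
        · intro x hx
          rw [h0, hF0, TwoSidedIdeal.mem_bot] at hx
          rw [h0, hc0, TwoSidedIdeal.mem_bot, hx]
          exact ZeroMemClass.coe_zero _
        · intro x hx
          rw [hj, hFsucc j] at hx
          rw [hj, hJ j]
          exact hvspan j x hx
      have hK₀K : ∀ x : B, x ∈ J i.castSucc → ρ x ∈ F i.castSucc := by
        rcases Fin.eq_zero_or_eq_succ i.castSucc with h0 | ⟨j, hj⟩
        · intro x hx
          rw [h0, hc0, TwoSidedIdeal.mem_bot] at hx
          rw [h0, hF0, TwoSidedIdeal.mem_bot, hx]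
          exact map_zero ρ
        · intro x hx
          rw [hj, hJ j] at hx
          rw [hj, hFsucc j]
          exact hρspan j x hx
      let τ : QuotRing B (J i.castSucc) →+* QuotRing ↥(degZero k gb) (F i.castSucc) :=
        QH.quotLift ρ _ _ hK₀K
      let ι : QuotRing ↥(degZero k gb) (F i.castSucc) →+* QuotRing B (J i.castSucc) :=
        QH.quotLift v _ _ hKK₀
      have hτι : ∀ s, τ (ι s) = s := by
        intro s
        obtain ⟨a, rfl⟩ := QH.quotMap_surjective _ s
        show quotMap _ _ (ρ (v a)) = quotMap _ _ a
        exact congrArg _ (hρid a)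
      have hker : ∀ x : QuotRing B (J i.castSucc), τ x = 0 → IsNilpotent x := by
        intro u hu
        obtain ⟨b, rfl⟩ := QH.quotMap_surjective _ u
        rw [show τ (quotMap B (J i.castSucc) b) = quotMap _ _ (ρ b) from rfl,
          QH.quotMap_eq_zero_iff] at hu
        have hc : ((ρ b : ↥(degZero k gb)) : B) ∈ J i.castSucc := hKK₀ _ hu
        set c : B := ((ρ b : ↥(degZero k gb)) : B) with hcdef
        have hn : (b - c) ^ d = 0 := by
          apply hρnil
          rw [map_sub, hcdef, hρid (ρ b), sub_self]
        have hbk : ∀ p : ℕ, b ^ p - (b - c) ^ p ∈ J i.castSucc := by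
          intro p
          induction p with
          | zero => simpa using (J i.castSucc).zero_mem
          | succ q ih =>
            have heq : b ^ (q + 1) - (b - c) ^ (q + 1)
                = (b ^ q - (b - c) ^ q) * b + (b - c) ^ q * c := by
              rw [pow_succ, pow_succ]; noncomm_ring
            rw [heq]
            exact (J i.castSucc).add_mem
              ((J i.castSucc).mul_mem_right _ _ ih)
              ((J i.castSucc).mul_mem_left _ _ hc)
        refine ⟨d, ?_⟩
        have hbd : b ^ d ∈ J i.castSucc := by
          have h3 := hbk d
          rw [hn, sub_zero] at h3
          exact h3
        rw [← map_pow]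
        exact (QH.quotMap_eq_zero_iff _ _).mpr hbd
      have hεidem : IsIdempotentElem (⟨e i, he i⟩ : ↥(degZero k gb)) :=
        Subtype.ext (hidem i)
      set f₀ : QuotRing ↥(degZero k gb) (F i.castSucc) :=
        quotMap _ (F i.castSucc) ⟨e i, he i⟩ with hf₀def
      have hf₀ : IsIdempotentElem f₀ := by
        show f₀ * f₀ = f₀
        rw [hf₀def, ← map_mul]
        exact congrArg _ hεidem
      obtain ⟨hh1, hh2, hh3⟩ := hcHered i
      have hfJ : ι f₀ ∈ TwoSidedIdeal.span
          ((quotMap B (J i.castSucc)) '' (J i.succ : Set B)) := by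
        show quotMap B (J i.castSucc) (v ⟨e i, he i⟩) ∈ _
        refine TwoSidedIdeal.subset_span ⟨e i, ?_, rfl⟩
        rw [SetLike.mem_coe, hJ i]
        exact TwoSidedIdeal.subset_span rfl
      have hτJ : ∀ r ∈ TwoSidedIdeal.span
          ((quotMap B (J i.castSucc)) '' (J i.succ : Set B)),
          τ r ∈ TwoSidedIdeal.span {f₀} := by
        intro r hr
        have h4 : r ∈ TwoSidedIdeal.comap τ (TwoSidedIdeal.span {f₀}) := by
          refine TwoSidedIdeal.mem_span_iff.mp hr _ ?_
          rintro _ ⟨x, hx, rfl⟩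
          rw [SetLike.mem_coe] at hx ⊢
          refine (TwoSidedIdeal.mem_comap τ).mpr ?_
          show quotMap _ (F i.castSucc) (ρ x) ∈ TwoSidedIdeal.span {f₀}
          have hx' : x ∈ TwoSidedIdeal.span {e i} := by rw [← hJ i]; exact hx
          refine QH.map_span_singleton_mem (quotMap _ (F i.castSucc)) (hρspan i x hx') ?_
          rw [show quotMap _ (F i.castSucc) (⟨e i, he i⟩ : ↥(degZero k gb)) = f₀ from rfl]
          exact TwoSidedIdeal.subset_span rfl
        exact (TwoSidedIdeal.mem_comap τ).mp h4
      have HI := QH.heredity_transfer ι τ hτι hker hf₀ _ hfJ hτJ hh2 hh3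
      have hgoal_eq : TwoSidedIdeal.span
          ((quotMap ↥(degZero k gb) (F i.castSucc)) '' ((F i.succ) : Set ↥(degZero k gb)))
          = TwoSidedIdeal.span {f₀} := by
        rw [hFsucc i, QH.span_image_span]
      rw [hgoal_eq]
      exact HI
  exact ⟨hmain, n, F, hmain⟩


end
end

section
/- Let a → B be a morphism of positively graded algebras with B tight over a, let M' be a graded B-module and suppose M := M'|_a is semilinear of degree m. Then for each s ∈ ℤ the graded a-submodule M^{≤s} of M is a B-submodule of M', so the quotient M^{#m} naturally inherits a graded B-module structure M'^{#m}; moreover the natural surjection M ↠ M^{#m} of graded a-modules agrees with the restriction to a of the natural surjection M' ↠ M'^{#m} of graded B-modules. -/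
noncomputable section

variable (k : Type) [Field k]

variable {A B : Type} [Ring A] [Algebra k A] [Ring B] [Algebra k B]

/-- A (ℤ-)grading on an `A`-module compatible with a positive grading of `A`. -/
structure ModGrading (ga : PosGrading k A) (M : Type) [AddCommGroup M] [Module k M]
    [Module A M] [IsScalarTower k A M] : Type where
  piece : ℤ → Submodule k M
  isInternal : DirectSum.IsInternal piece
  smul_mem : ∀ {i : ℕ} {j : ℤ} {x : A} {m : M}, x ∈ ga.piece i → m ∈ piece j →
    x • m ∈ piece (i + j)

/-- A bundled finite-dimensional graded module. -/
structure GrMod (ga : PosGrading k A) : Type 1 where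
  carrier : Type
  [isAddCommGroup : AddCommGroup carrier]
  [isModulek : Module k carrier]
  [isModuleA : Module A carrier]
  [isTower : IsScalarTower k A carrier]
  fin : FiniteDimensional k carrier
  grading : ModGrading k ga carrier

attribute [instance] GrMod.isAddCommGroup GrMod.isModulek GrMod.isModuleA GrMod.isTower GrMod.fin

section OneAlgebra

variable {ga : PosGrading k A}

/-- A grade-preserving module map. -/
def IsGradedMap {M N : Type} [AddCommGroup M] [Module k M] [Module A M] [IsScalarTower k A M]
    [AddCommGroup N] [Module k N] [Module A N] [IsScalarTower k A N]
    (gm : ModGrading k ga M) (gn : ModGrading k ga N) (f : M →ₗ[A] N) : Prop :=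
  ∀ (i : ℤ) (m : M), m ∈ gm.piece i → f m ∈ gn.piece i

/-- Projectivity in the category of graded modules. -/
def IsGrProjective (P : GrMod k ga) : Prop :=
  ∀ (M N : GrMod k ga) (g : M.carrier →ₗ[A] N.carrier), IsGradedMap k M.grading N.grading g →
    Function.Surjective g → ∀ h : P.carrier →ₗ[A] N.carrier, IsGradedMap k P.grading N.grading h →
      ∃ l : P.carrier →ₗ[A] M.carrier, IsGradedMap k P.grading M.grading l ∧ g ∘ₗ l = h

/-- `M` is generated over `A` by its grade-`s` component. -/
def GenInDeg (M : GrMod k ga) (s : ℤ) : Prop :=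
  (⊤ : Submodule A M.carrier) ≤ Submodule.span A (M.grading.piece s : Set M.carrier)

/-- `M` is generated over `A` by its components in grades `< m`. -/
def GenBelow (M : GrMod k ga) (m : ℤ) : Prop :=
  (⊤ : Submodule A M.carrier) ≤
    Submodule.span A {x : M.carrier | ∃ i : ℤ, i < m ∧ x ∈ M.grading.piece i}

/-- The submodule `S` is generated over `A` by its grade-`t` part. -/
def SubGenInDeg {M : Type} [AddCommGroup M] [Module k M] [Module A M] [IsScalarTower k A M]
    (gm : ModGrading k ga M) (S : Submodule A M) (t : ℤ) : Prop :=
  S ≤ Submodule.span A ((S : Set M) ∩ (gm.piece t : Set M))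

/-- A linear graded projective resolution of `M`, where `M` is generated in grade `m`. -/
structure LinearResolution (M : GrMod k ga) (m : ℤ) : Type 1 where
  P : ℕ → GrMod k ga
  aug : (P 0).carrier →ₗ[A] M.carrier
  d : ∀ n : ℕ, (P (n + 1)).carrier →ₗ[A] (P n).carrier
  aug_graded : IsGradedMap k (P 0).grading M.grading aug
  d_graded : ∀ n, IsGradedMap k (P (n + 1)).grading (P n).grading (d n)
  proj : ∀ n, IsGrProjective k (P n)
  aug_surj : Function.Surjective aug
  exact_zero : LinearMap.range (d 0) = LinearMap.ker aug
  exact_succ : ∀ n, LinearMap.range (d (n + 1)) = LinearMap.ker (d n)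
  ker_aug_gen : SubGenInDeg k (P 0).grading (LinearMap.ker aug) (m + 1)
  ker_d_gen : ∀ n, SubGenInDeg k (P (n + 1)).grading (LinearMap.ker (d n)) (m + (n + 1) + 1)

/-- A graded module is linear of degree `m`. -/
def IsLinearOfDegree (M : GrMod k ga) (m : ℤ) : Prop :=
  GenInDeg k M m ∧ Nonempty (LinearResolution k M m)

/-- A graded module is semilinear of degree `m`: it is a direct sum (expressed via a biproduct
diagram) of a module linear of degree `m` and a projective graded module generated in
grades `< m`. -/
def IsSemilinearOfDegree (M : GrMod k ga) (m : ℤ) : Prop :=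
  ∃ (N P : GrMod k ga) (ι₁ : N.carrier →ₗ[A] M.carrier) (ι₂ : P.carrier →ₗ[A] M.carrier)
    (π₁ : M.carrier →ₗ[A] N.carrier) (π₂ : M.carrier →ₗ[A] P.carrier),
      IsGradedMap k N.grading M.grading ι₁ ∧ IsGradedMap k P.grading M.grading ι₂ ∧
      IsGradedMap k M.grading N.grading π₁ ∧ IsGradedMap k M.grading P.grading π₂ ∧
      π₁ ∘ₗ ι₁ = LinearMap.id ∧ π₂ ∘ₗ ι₂ = LinearMap.id ∧
      π₁ ∘ₗ ι₂ = 0 ∧ π₂ ∘ₗ ι₁ = 0 ∧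
      ι₁ ∘ₗ π₁ + ι₂ ∘ₗ π₂ = LinearMap.id ∧
      IsLinearOfDegree k N m ∧ IsGrProjective k P ∧ GenBelow k P m

/-- `M^{≤ s} = Σ_{j ≤ s} A·M_j`. -/
def GrMod.hatLe (M : GrMod k ga) (s : ℤ) : Submodule A M.carrier :=
  Submodule.span A {x : M.carrier | ∃ j : ℤ, j ≤ s ∧ x ∈ M.grading.piece j}

/-- `M^s = A·M_s`. -/
def GrMod.hatAt (M : GrMod k ga) (s : ℤ) : Submodule A M.carrier :=
  Submodule.span A (M.grading.piece s : Set M.carrier)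

/-- `(Q, π)` realizes the quotient `M^{≤ s}/M^{< s} = M/M^{< s}` (for `M` generated in
grades `≤ s`) as a graded module. -/
def IsTopHash (M : GrMod k ga) (Q : GrMod k ga) (π : M.carrier →ₗ[A] Q.carrier) (s : ℤ) : Prop :=
  Function.Surjective π ∧ LinearMap.ker π = M.hatLe k (s - 1) ∧
    IsGradedMap k M.grading Q.grading π ∧
    ∀ (i : ℤ) (v : Q.carrier), v ∈ Q.grading.piece i → ∃ x ∈ M.grading.piece i, π x = v

/-- The kernel of `ρ` is contained in `rad(A)·R`. -/
def SmallKernel {R N : GrMod k ga} (ρ : R.carrier →ₗ[A] N.carrier) : Prop :=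
  ∀ x ∈ LinearMap.ker ρ,
    x ∈ Submodule.span A
      {z : R.carrier | ∃ r ∈ Ideal.jacobson (⊥ : Ideal A), ∃ v : R.carrier, z = r • v}

/-- `ρ : R ↠ N` is a projective cover in the category of graded modules. -/
def IsGrProjCover (R N : GrMod k ga) (ρ : R.carrier →ₗ[A] N.carrier) : Prop :=
  IsGradedMap k R.grading N.grading ρ ∧ Function.Surjective ρ ∧
    IsGrProjective k R ∧ SmallKernel k ρ

/-- `(K, κ)` realizes the kernel of `ρ` as a graded module. -/
def IsKernelRealization {R N : GrMod k ga} (ρ : R.carrier →ₗ[A] N.carrier)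
    (K : GrMod k ga) (κ : K.carrier →ₗ[A] R.carrier) : Prop :=
  Function.Injective κ ∧ LinearMap.range κ = LinearMap.ker ρ ∧
    IsGradedMap k K.grading R.grading κ ∧
    ∀ (i : ℤ) (x : R.carrier), x ∈ R.grading.piece i → x ∈ LinearMap.ker ρ →
      ∃ y ∈ K.grading.piece i, κ y = x

end OneAlgebra

section TwoAlgebras

/-- A grade-preserving algebra homomorphism. -/
def IsGradedAlgHom (ga : PosGrading k A) (gb : PosGrading k B) (φ : A →ₐ[k] B) : Prop :=
  ∀ (i : ℕ) (x : A), x ∈ ga.piece i → φ x ∈ gb.piece i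

/-- `B` is tight over `A` (via `φ`): `A·B₀ = B`. -/
def IsTight (gb : PosGrading k B) (φ : A →ₐ[k] B) : Prop :=
  ∀ b : B, b ∈ Submodule.span k {z : B | ∃ (x : A) (y : B), y ∈ gb.piece 0 ∧ z = φ x * y}

variable {ga : PosGrading k A} {gb : PosGrading k B}

/-- Restriction of a graded `B`-module to a graded `A`-module along a graded algebra map. -/
@[reducible] def GrMod.res (φ : A →ₐ[k] B) (hφ : IsGradedAlgHom k ga gb φ)
    (M : GrMod k gb) : GrMod k ga :=
  letI : Module A M.carrier := Module.compHom M.carrier φ.toRingHom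
  haveI : IsScalarTower k A M.carrier := ⟨fun c x m => show φ (c • x) • m = c • (φ x • m) by
    rw [map_smul, smul_assoc]⟩
  { carrier := M.carrier
    fin := M.fin
    grading :=
      { piece := M.grading.piece
        isInternal := M.grading.isInternal
        smul_mem := fun {i j x m} hx hm =>
          show φ x • m ∈ M.grading.piece (i + j) from M.grading.smul_mem (hφ i x hx) hm } }

/-- A `B`-linear map viewed as an `A`-linear map between restricted modules. -/
def resMap (φ : A →ₐ[k] B) (hφ : IsGradedAlgHom k ga gb φ) {M N : GrMod k gb}
    (h : M.carrier →ₗ[B] N.carrier) :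
    (GrMod.res k φ hφ M).carrier →ₗ[A] (GrMod.res k φ hφ N).carrier where
  toFun := h
  map_add' := h.map_add
  map_smul' := fun a m => by
    show h (φ a • m) = φ a • h m
    exact h.map_smul (φ a) m

/-- `(Q, π)` realizes, in graded `B`-modules, the quotient `M^{#s} = M/M^{< s}` of `M`,
where `M^{< s}` is taken with respect to the restricted `A`-structure. -/
def IsTopHashB (φ : A →ₐ[k] B) (hφ : IsGradedAlgHom k ga gb φ) (M Q : GrMod k gb)
    (π : M.carrier →ₗ[B] Q.carrier) (s : ℤ) : Prop :=
  Function.Surjective π ∧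
    ((LinearMap.ker π : Set M.carrier) =
      (((GrMod.res k φ hφ M).hatLe k (s - 1) : Submodule A _) : Set M.carrier)) ∧
    IsGradedMap k M.grading Q.grading π ∧
    ∀ (i : ℤ) (v : Q.carrier), v ∈ Q.grading.piece i → ∃ x ∈ M.grading.piece i, π x = v

end TwoAlgebras

end

noncomputable section AuxStmt4

open DirectSum

variable {k A B : Type} [Field k] [Ring A] [Algebra k A] [Ring B] [Algebra k B]
variable {ga : PosGrading k A} {gb : PosGrading k B}

/-- The set of "homogeneous generators" of `M^{≤ s}`. -/
def auxT (M : GrMod k ga) (s : ℤ) : Set M.carrier :=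
  {z : M.carrier | ∃ (i : ℕ) (j : ℤ) (a : A) (v : M.carrier), j ≤ s ∧ a ∈ ga.piece i ∧
      v ∈ M.grading.piece j ∧ z = a • v}

/-- Scalar multiplication into a fixed vector, as a `k`-linear map. -/
def smulIntoAux (M : GrMod k ga) (w : M.carrier) : A →ₗ[k] M.carrier where
  toFun a := a • w
  map_add' a b := add_smul a b w
  map_smul' c a := smul_assoc c a w

theorem auxT_smul (M : GrMod k ga) (s : ℤ) (a : A) {x : M.carrier}
    (hx : x ∈ Submodule.span k (auxT M s)) : a • x ∈ Submodule.span k (auxT M s) := by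
  induction hx using Submodule.span_induction with
  | mem t ht =>
    obtain ⟨i, j, a', v, hj, ha', hv, rfl⟩ := ht
    have key : (⊤ : Submodule k A) ≤
        Submodule.comap (smulIntoAux M (a' • v)) (Submodule.span k (auxT M s)) := by
      rw [← ga.isInternal.submodule_iSup_eq_top]
      refine iSup_le fun i0 => fun b hb => ?_
      refine Submodule.mem_comap.2 (Submodule.subset_span
        ⟨i0 + i, j, b * a', v, hj, ga.mul_mem hb ha', hv, ?_⟩)
      show b • (a' • v) = (b * a') • v
      rw [mul_smul]
    have := key (Submodule.mem_top (x := a))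
    simpa [smulIntoAux] using this
  | zero => rw [smul_zero]; exact Submodule.zero_mem _
  | add y z _ _ ihy ihz => rw [smul_add]; exact Submodule.add_mem _ ihy ihz
  | smul c y _ ih =>
    rw [← smul_comm c a y]
    exact Submodule.smul_mem _ c ih

theorem hatLe_le_spanT (M : GrMod k ga) (s : ℤ) {x : M.carrier} (hx : x ∈ M.hatLe k s) :
    x ∈ Submodule.span k (auxT M s) := by
  induction hx using Submodule.span_induction with
  | mem v hv =>
    obtain ⟨j, hj, hvj⟩ := hv
    exact Submodule.subset_span ⟨0, j, 1, v, hj, ga.one_mem, hvj, (one_smul A v).symm⟩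
  | zero => exact Submodule.zero_mem _
  | add y z _ _ ihy ihz => exact Submodule.add_mem _ ihy ihz
  | smul a y _ ih => exact auxT_smul M s a ih

theorem hatLe_component_mem (M : GrMod k ga) (s : ℤ) {x : M.carrier}
    (hx : x ∈ M.hatLe k s) (i : ℤ) :
    (((LinearEquiv.ofBijective (DirectSum.coeLinearMap M.grading.piece)
        M.grading.isInternal).symm x i : M.grading.piece i) : M.carrier) ∈ M.hatLe k s := by
  classical
  set e := LinearEquiv.ofBijective (DirectSum.coeLinearMap M.grading.piece)
    M.grading.isInternal with he
  let cm : M.carrier →ₗ[k] M.carrier :=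
    { toFun := fun y => ↑(e.symm y i)
      map_add' := fun y z => by
        show ((e.symm (y + z) i : M.grading.piece i) : M.carrier)
          = ((e.symm y i : M.grading.piece i) : M.carrier)
            + ((e.symm z i : M.grading.piece i) : M.carrier)
        rw [map_add, DirectSum.add_apply, Submodule.coe_add]
      map_smul' := fun c y => by
        show ((e.symm (c • y) i : M.grading.piece i) : M.carrier)
          = c • ((e.symm y i : M.grading.piece i) : M.carrier)
        rw [map_smul, DirectSum.smul_apply, SetLike.val_smul] }
  have key : Submodule.span k (auxT M s) ≤
      Submodule.comap cm ((M.hatLe k s).restrictScalars k) := by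
    refine Submodule.span_le.2 ?_
    rintro z ⟨i', j, a, v, hj, ha, hv, rfl⟩
    have hz : a • v ∈ M.grading.piece ((i' : ℤ) + j) := M.grading.smul_mem ha hv
    have hmem : a • v ∈ M.hatLe k s :=
      Submodule.smul_mem _ _ (Submodule.subset_span ⟨j, hj, hv⟩)
    by_cases hij : ((i' : ℤ) + j) = i
    · have h1 := M.grading.isInternal.ofBijective_coeLinearMap_of_mem (i := i) (hij ▸ hz)
      show ((e.symm (a • v) i : M.grading.piece i) : M.carrier) ∈ M.hatLe k s
      rw [he, h1]
      exact hmem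
    · have h1 := M.grading.isInternal.ofBijective_coeLinearMap_of_mem_ne hij hz
      show ((e.symm (a • v) i : M.grading.piece i) : M.carrier) ∈ M.hatLe k s
      rw [he, h1]
      exact Submodule.zero_mem _
  exact key (hatLe_le_spanT M s hx)

theorem aux_quot_internal {M Q : Type} [AddCommGroup M] [Module k M] [AddCommGroup Q]
    [Module k Q] (p : ℤ → Submodule k M) (hp : DirectSum.IsInternal p)
    (g : M →ₗ[k] Q) (hg : Function.Surjective g)
    (hker : ∀ x : M, g x = 0 → ∀ i : ℤ,
      g (((LinearEquiv.ofBijective (DirectSum.coeLinearMap p) hp).symm x i : p i) : M) = 0) :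
    DirectSum.IsInternal (fun i => (p i).map g) := by
  classical
  set e := LinearEquiv.ofBijective (DirectSum.coeLinearMap p) hp with he
  let fQ : ∀ i : ℤ, p i →ₗ[k] ((p i).map g) := fun i =>
    g.restrict fun x hx => Submodule.mem_map_of_mem hx
  have hfQ : ∀ i, Function.Surjective (fQ i) := by
    intro i q
    obtain ⟨x, hx, hgx⟩ := q.2
    exact ⟨⟨x, hx⟩, Subtype.ext hgx⟩
  have hsec : ∀ i : ℤ, ∃ sec : ((p i).map g) →ₗ[k] p i, (fQ i) ∘ₗ sec = LinearMap.id :=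
    fun i => (fQ i).exists_rightInverse_of_surjective (LinearMap.range_eq_top.2 (hfQ i))
  choose sec hsec using hsec
  let F : (⨁ i, p i) →ₗ[k] ⨁ i, ((p i).map g : Submodule k Q) :=
    DirectSum.toModule k ℤ _ fun i =>
      (DirectSum.lof k ℤ (fun i => ((p i).map g : Submodule k Q)) i) ∘ₗ fQ i
  let G : (⨁ i, ((p i).map g : Submodule k Q)) →ₗ[k] ⨁ i, p i :=
    DirectSum.toModule k ℤ _ fun i => (DirectSum.lof k ℤ (fun i => p i) i) ∘ₗ sec i
  have key1 : (DirectSum.coeLinearMap fun i => (p i).map g) ∘ₗ F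
      = g ∘ₗ DirectSum.coeLinearMap p := by
    refine DirectSum.linearMap_ext _ fun i => ?_
    ext x
    simp only [LinearMap.comp_apply]
    unfold F fQ
    rw [DirectSum.toModule_lof]
    simp only [LinearMap.comp_apply]
    rw [DirectSum.lof_eq_of, DirectSum.coeLinearMap_of]
    rw [DirectSum.lof_eq_of, DirectSum.coeLinearMap_of]
    rfl
  have key3 : F ∘ₗ G = LinearMap.id := by
    refine DirectSum.linearMap_ext _ fun i => ?_
    ext q
    simp only [LinearMap.comp_apply, LinearMap.id_apply]
    unfold F G
    rw [DirectSum.toModule_lof]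
    simp only [LinearMap.comp_apply]
    rw [DirectSum.toModule_lof]
    simp only [LinearMap.comp_apply]
    have h1 := LinearMap.congr_fun (hsec i) q
    simp only [LinearMap.comp_apply, LinearMap.id_apply] at h1
    rw [h1]
  have key2 : ∀ (c : ⨁ i, p i) (j : ℤ), F c j = fQ j (c j) := by
    intro c j
    have hcmp : (DirectSum.component k ℤ _ j) ∘ₗ F
        = (fQ j) ∘ₗ (DirectSum.component k ℤ (fun i => (p i : Type)) j) := by
      refine DirectSum.linearMap_ext _ fun i => ?_
      ext x
      simp only [LinearMap.comp_apply]
      unfold F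
      rw [DirectSum.toModule_lof]
      simp only [LinearMap.comp_apply]
      by_cases h : i = j
      · subst h
        rw [DirectSum.component.lof_self, DirectSum.component.lof_self]
      · rw [DirectSum.component.of, DirectSum.component.of, dif_neg h, dif_neg h, map_zero]
    exact LinearMap.congr_fun hcmp c
  have hbij : Function.Bijective (DirectSum.coeLinearMap fun i => (p i).map g) := by
    constructor
    · refine (injective_iff_map_eq_zero _).2 fun d hd => ?_
      have h1 : F (G d) = d := LinearMap.congr_fun key3 d
      have hx : g (DirectSum.coeLinearMap p (G d)) = 0 := by
        have h2 := LinearMap.congr_fun key1 (G d)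
        simp only [LinearMap.comp_apply] at h2
        rw [← h2, h1]
        exact hd
      have h2 : e.symm (DirectSum.coeLinearMap p (G d)) = G d := by
        have h3 : DirectSum.coeLinearMap p (G d) = e (G d) := rfl
        rw [h3, LinearEquiv.symm_apply_apply]
      refine DirectSum.ext fun j => ?_
      rw [DirectSum.zero_apply]
      have h3 : g ((G d j : p j) : M) = 0 := by
        have h4 := hker _ hx j
        rwa [he, h2] at h4
      have h4 : fQ j (G d j) = 0 := Subtype.ext h3
      have h5 : d j = fQ j (G d j) := by
        conv_lhs => rw [← h1]
        exact key2 (G d) j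
      show d j = 0
      rw [h5, h4]
    · intro q
      obtain ⟨x, rfl⟩ := hg q
      obtain ⟨c, rfl⟩ := e.surjective x
      refine ⟨F c, ?_⟩
      have h2 := LinearMap.congr_fun key1 c
      simp only [LinearMap.comp_apply] at h2
      exact h2
  exact hbij

theorem aux_stable (φ : A →ₐ[k] B) (hφ : IsGradedAlgHom k ga gb φ)
    (htight : IsTight k gb φ) (M' : GrMod k gb) (s : ℤ) (b : B) (x : M'.carrier)
    (hx : x ∈ (GrMod.res k φ hφ M').hatLe k s) :
    b • x ∈ (GrMod.res k φ hφ M').hatLe k s := by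
  induction hx using Submodule.span_induction generalizing b with
  | mem v hv =>
    obtain ⟨j, hj, hvj⟩ := hv
    have hb := htight b
    induction hb using Submodule.span_induction with
    | mem z hz =>
      obtain ⟨xa, y, hy, rfl⟩ := hz
      have h0 : y • v ∈ (GrMod.res k φ hφ M').grading.piece j := by
        have := M'.grading.smul_mem (i := 0) hy hvj
        simpa using this
      have h1 : y • v ∈ (GrMod.res k φ hφ M').hatLe k s :=
        Submodule.subset_span ⟨j, hj, h0⟩
      have h2 : (φ xa * y) • v = φ xa • (y • v) := mul_smul (φ xa) y v
      rw [h2]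
      exact Submodule.smul_mem _ xa h1
    | zero => rw [zero_smul]; exact Submodule.zero_mem _
    | add b1 b2 _ _ ih1 ih2 => rw [add_smul]; exact Submodule.add_mem _ ih1 ih2
    | smul c bb _ ih =>
      rw [smul_assoc]
      exact Submodule.smul_mem (((GrMod.res k φ hφ M').hatLe k s).restrictScalars k) c ih
  | zero => rw [smul_zero]; exact Submodule.zero_mem _
  | add y z _ _ ihy ihz => rw [smul_add]; exact Submodule.add_mem _ (ihy b) (ihz b)
  | smul a y _ ih =>
    show b • (φ a • y) ∈ (GrMod.res k φ hφ M').hatLe k s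
    rw [← mul_smul]
    exact ih (b * φ a)

end AuxStmt4


noncomputable section

variable (k A B : Type) [Field k] [Ring A] [Algebra k A] [FiniteDimensional k A]
  [Ring B] [Algebra k B] [FiniteDimensional k B]
  (ga : PosGrading k A) (gb : PosGrading k B)

/-- If `B` is tight over `a` and `M'` is a graded `B`-module whose restriction
to `a` is semilinear of degree `m`, then each `M^{≤s}` is a `B`-submodule, so `M^{#m}` inherits
a graded `B`-module structure, compatibly with the natural surjection. -/
theorem stmt4 (φ : A →ₐ[k] B) (hφ : IsGradedAlgHom k ga gb φ) (htight : IsTight k gb φ)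
    (M' : GrMod k gb) (m : ℤ)
    (hsemi : IsSemilinearOfDegree k (GrMod.res k φ hφ M') m) :
    (∀ (s : ℤ) (b : B) (x : M'.carrier),
        x ∈ (GrMod.res k φ hφ M').hatLe k s → b • x ∈ (GrMod.res k φ hφ M').hatLe k s) ∧
    ∃ (Q' : GrMod k gb) (π' : M'.carrier →ₗ[B] Q'.carrier),
      IsTopHashB k φ hφ M' Q' π' m ∧
      IsTopHash k (GrMod.res k φ hφ M') (GrMod.res k φ hφ Q') (resMap k φ hφ π') m := by
  classical
  have stab : ∀ (s : ℤ) (b : B) (x : M'.carrier),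
      x ∈ (GrMod.res k φ hφ M').hatLe k s → b • x ∈ (GrMod.res k φ hφ M').hatLe k s :=
    fun s b x hx => aux_stable φ hφ htight M' s b x hx
  refine ⟨stab, ?_⟩
  let NB : Submodule B M'.carrier :=
    { carrier := ((GrMod.res k φ hφ M').hatLe k (m - 1) : Set M'.carrier)
      add_mem' := fun h1 h2 => Submodule.add_mem _ h1 h2
      zero_mem' := Submodule.zero_mem _
      smul_mem' := fun b x hx => stab (m - 1) b x hx }
  let gk : M'.carrier →ₗ[k] (M'.carrier ⧸ NB) := (NB.mkQ).restrictScalars k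
  have hgk : Function.Surjective gk := Submodule.mkQ_surjective NB
  have hker0 : ∀ x : M'.carrier, gk x = 0 ↔ x ∈ (GrMod.res k φ hφ M').hatLe k (m - 1) :=
    fun x => Submodule.Quotient.mk_eq_zero NB
  have hintQ : DirectSum.IsInternal (fun i => (M'.grading.piece i).map gk) := by
    refine aux_quot_internal M'.grading.piece M'.grading.isInternal gk hgk ?_
    intro x hx i
    have hx' : x ∈ (GrMod.res k φ hφ M').hatLe k (m - 1) := (hker0 x).1 hx
    have hcomp := hatLe_component_mem (GrMod.res k φ hφ M') (m - 1) hx' i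
    exact (hker0 _).2 hcomp
  let Qgr : ModGrading k gb (M'.carrier ⧸ NB) :=
    { piece := fun i => (M'.grading.piece i).map gk
      isInternal := hintQ
      smul_mem := by
        intro i j b q hb hq
        obtain ⟨x, hx, rfl⟩ := hq
        refine ⟨b • x, M'.grading.smul_mem hb hx, ?_⟩
        exact map_smul NB.mkQ b x }
  haveI hfinQ : FiniteDimensional k (M'.carrier ⧸ NB) := Module.Finite.of_surjective gk hgk
  let Q' : GrMod k gb := { carrier := M'.carrier ⧸ NB, fin := hfinQ, grading := Qgr }
  refine ⟨Q', NB.mkQ, ⟨?_, ?_, ?_, ?_⟩, ⟨?_, ?_, ?_, ?_⟩⟩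
  · exact Submodule.mkQ_surjective NB
  · rw [Submodule.ker_mkQ]
    rfl
  · intro i x hx
    exact ⟨x, hx, rfl⟩
  · intro i v hv
    obtain ⟨x, hx, hgx⟩ := hv
    exact ⟨x, hx, hgx⟩
  · exact Submodule.mkQ_surjective NB
  · refine Submodule.ext fun x => ?_
    exact Submodule.Quotient.mk_eq_zero NB
  · intro i x hx
    exact ⟨x, hx, rfl⟩
  · intro i v hv
    obtain ⟨x, hx, hgx⟩ := hv
    exact ⟨x, hx, hgx⟩

end
end

section
/- Let a → B be a morphism of positively graded algebras over a field k with B tight over a. Let N be a graded B-module whose restriction N|_a is semilinear of degree m, and suppose there exists a projective B-module P such that P|_a is projective as an a-module and there is a surjection P ↠ N of B-modules. Let R ↠ N be the projective cover of N in the category of graded B-modules. Then R|_a is projective in the category of graded a-modules. -/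
noncomputable section
namespace Stmt5Aux
open DirectSum

variable {k : Type} [Field k] {M : Type} [AddCommGroup M] [Module k M]
variable (p : ℤ → Submodule k M)

def decEquiv (hp : DirectSum.IsInternal p) : M ≃ₗ[k] ⨁ i, p i :=
  (LinearEquiv.ofBijective (DirectSum.coeLinearMap p) hp).symm

def proj (hp : DirectSum.IsInternal p) (i : ℤ) : M →ₗ[k] M :=
  (p i).subtype ∘ₗ (DirectSum.component k ℤ (fun i => ↥(p i)) i) ∘ₗ (decEquiv p hp).toLinearMap

variable (hp : DirectSum.IsInternal p)

lemma proj_apply (i : ℤ) (x : M) : proj p hp i x = ((decEquiv p hp x) i : M) := rfl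

lemma proj_mem (i : ℤ) (x : M) : proj p hp i x ∈ p i := ((decEquiv p hp x) i).2

lemma proj_eq_of_mem {i : ℤ} {x : M} (hx : x ∈ p i) : proj p hp i x = x := by
  have := hp.ofBijective_coeLinearMap_of_mem (i := i) hx
  rw [proj_apply, decEquiv, this]

lemma proj_eq_zero_of_mem {i j : ℤ} {x : M} (hx : x ∈ p i) (hij : i ≠ j) :
    proj p hp j x = 0 := by
  have := hp.ofBijective_coeLinearMap_of_mem_ne (i := i) (j := j) hij hx
  rw [proj_apply, decEquiv, this]; rfl

lemma coe_decEquiv_symm (y : ⨁ i, p i) :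
    (decEquiv p hp).symm y = DirectSum.coeLinearMap p y := rfl

lemma exists_finset_proj (x : M) :
    ∃ s : Finset ℤ, (∀ i, i ∉ s → proj p hp i x = 0) ∧ ∑ i ∈ s, proj p hp i x = x := by
  classical
  set x' := decEquiv p hp x with hx'
  refine ⟨x'.support, fun i hi => ?_, ?_⟩
  · rw [proj_apply, ← hx', (DFinsupp.notMem_support_iff).1 hi]; rfl
  · have h1 : (DirectSum.coeLinearMap p) x' = x := by
      rw [hx']; exact (decEquiv p hp).symm_apply_apply x
    rw [DirectSum.coeLinearMap_eq_dfinsuppSum, DFinsupp.sum] at h1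
    calc ∑ i ∈ x'.support, proj p hp i x = ∑ i ∈ x'.support, ((x' i : M)) :=
          Finset.sum_congr rfl (fun i _ => proj_apply p hp i x)
      _ = x := h1


section GrModAux
variable {k : Type} [Field k]
variable {A : Type} [Ring A] [Algebra k A] {ga : PosGrading k A}

def mproj (M : GrMod k ga) (i : ℤ) : M.carrier →ₗ[k] M.carrier :=
  proj M.grading.piece M.grading.isInternal i

lemma mproj_mem (M : GrMod k ga) (i : ℤ) (x : M.carrier) :
    mproj M i x ∈ M.grading.piece i := proj_mem _ _ i x

lemma mproj_eq_of_mem (M : GrMod k ga) {i : ℤ} {x : M.carrier}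
    (hx : x ∈ M.grading.piece i) : mproj M i x = x := proj_eq_of_mem _ _ hx

lemma mproj_eq_zero_of_mem (M : GrMod k ga) {i j : ℤ} {x : M.carrier}
    (hx : x ∈ M.grading.piece i) (hij : i ≠ j) : mproj M j x = 0 :=
  proj_eq_zero_of_mem _ _ hx hij

lemma mproj_finset (M : GrMod k ga) (x : M.carrier) :
    ∃ s : Finset ℤ, (∀ i, i ∉ s → mproj M i x = 0) ∧ ∑ i ∈ s, mproj M i x = x :=
  exists_finset_proj _ _ x

lemma mproj_comm {M N : GrMod k ga} (g : M.carrier →ₗ[A] N.carrier)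
    (hg : IsGradedMap k M.grading N.grading g) (i : ℤ) (x : M.carrier) :
    mproj N i (g x) = g (mproj M i x) := by
  classical
  obtain ⟨s, hs0, hssum⟩ := mproj_finset M x
  have h1 : g x = ∑ j ∈ s, g (mproj M j x) := by rw [← map_sum, hssum]
  rw [h1, map_sum]
  have h2 : ∀ j ∈ s, mproj N i (g (mproj M j x)) =
      if j = i then g (mproj M i x) else 0 := by
    intro j _
    by_cases hji : j = i
    · subst hji
      rw [if_pos rfl]
      exact mproj_eq_of_mem N (hg j _ (mproj_mem M j x))
    · rw [if_neg hji]
      exact mproj_eq_zero_of_mem N (hg j _ (mproj_mem M j x)) hji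
  rw [Finset.sum_congr rfl h2, Finset.sum_ite_eq' s i (fun _ => g (mproj M i x))]
  by_cases his : i ∈ s
  · rw [if_pos his]
  · rw [if_neg his]
    have : mproj M i x = 0 := hs0 i his
    rw [this, map_zero]

lemma mproj_smul (M : GrMod k ga) {n : ℕ} {a : A} (ha : a ∈ ga.piece n) (i : ℤ)
    (x : M.carrier) : mproj M ((n : ℤ) + i) (a • x) = a • mproj M i x := by
  classical
  obtain ⟨s, hs0, hssum⟩ := mproj_finset M x
  have h1 : a • x = ∑ j ∈ s, a • mproj M j x := by rw [← Finset.smul_sum, hssum]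
  rw [h1, map_sum]
  have h2 : ∀ j ∈ s, mproj M ((n : ℤ) + i) (a • mproj M j x) =
      if j = i then a • mproj M i x else 0 := by
    intro j _
    have hmem : a • mproj M j x ∈ M.grading.piece ((n : ℤ) + j) :=
      M.grading.smul_mem ha (mproj_mem M j x)
    by_cases hji : j = i
    · subst hji
      rw [if_pos rfl]
      exact mproj_eq_of_mem M hmem
    · rw [if_neg hji]
      exact mproj_eq_zero_of_mem M hmem (by omega)
  rw [Finset.sum_congr rfl h2, Finset.sum_ite_eq' s i (fun _ => a • mproj M i x)]
  by_cases his : i ∈ s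
  · rw [if_pos his]
  · rw [if_neg his]
    have : mproj M i x = 0 := hs0 i his
    rw [this, smul_zero]

lemma mproj_cover (M : GrMod k ga) :
    ∃ S : Finset ℤ, ∀ i, i ∉ S → ∀ x : M.carrier, mproj M i x = 0 := by
  classical
  have hfin : {i : ℤ | M.grading.piece i ≠ ⊥}.Finite :=
    Submodule.finite_ne_bot_of_iSupIndep M.grading.isInternal.submodule_iSupIndep
  refine ⟨hfin.toFinset, fun i hi x => ?_⟩
  have hbot : M.grading.piece i = ⊥ := by
    by_contra hne
    exact hi (hfin.mem_toFinset.2 hne)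
  have := mproj_mem M i x
  rw [hbot] at this
  simpa using this

theorem homogenize {M N Q : GrMod k ga} (g : M.carrier →ₗ[A] N.carrier)
    (hg : IsGradedMap k M.grading N.grading g)
    (h : Q.carrier →ₗ[A] N.carrier) (hh : IsGradedMap k Q.grading N.grading h)
    (l : Q.carrier →ₗ[A] M.carrier) (hl : g ∘ₗ l = h) :
    ∃ l' : Q.carrier →ₗ[A] M.carrier,
      IsGradedMap k Q.grading M.grading l' ∧ g ∘ₗ l' = h := by
  classical
  obtain ⟨S, hS⟩ := mproj_cover Q
  set lk : Q.carrier →ₗ[k] M.carrier :=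
    ∑ i ∈ S, (mproj M i) ∘ₗ (l.restrictScalars k) ∘ₗ (mproj Q i) with hlk
  have heval : ∀ (t : ℤ) (x : Q.carrier), x ∈ Q.grading.piece t →
      lk x = mproj M t (l x) := by
    intro t x hx
    by_cases htS : t ∈ S
    · have : ∀ i ∈ S, (mproj M i) (l (mproj Q i x)) =
          if i = t then mproj M t (l x) else 0 := by
        intro i _
        by_cases hit : i = t
        · subst hit
          rw [if_pos rfl, mproj_eq_of_mem Q hx]
        · rw [if_neg hit, mproj_eq_zero_of_mem Q hx (Ne.symm hit), map_zero, map_zero]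
      rw [hlk]
      simp only [LinearMap.coe_sum, Finset.sum_apply, LinearMap.coe_comp,
        Function.comp_apply, LinearMap.coe_restrictScalars]
      rw [Finset.sum_congr rfl this, Finset.sum_ite_eq' S t
        (fun _ => mproj M t (l x)), if_pos htS]
    · have hx0 : x = 0 := by
        have h1 := mproj_eq_of_mem Q hx
        rw [hS t htS x] at h1
        exact h1.symm
      subst hx0
      simp
  have hsmul : ∀ (a : A) (x : Q.carrier), lk (a • x) = a • lk x := by
    have hhom : ∀ (n : ℕ) (a : A), a ∈ ga.piece n → ∀ (x : Q.carrier),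
        lk (a • x) = a • lk x := by
      intro n a ha
      have hpiece : ∀ (t : ℤ) (x : Q.carrier), x ∈ Q.grading.piece t →
          lk (a • x) = a • lk x := by
        intro t x hx
        have hax : a • x ∈ Q.grading.piece ((n : ℤ) + t) := Q.grading.smul_mem ha hx
        rw [heval _ _ hax, heval t x hx, l.map_smul, mproj_smul M ha t (l x)]
      intro x
      have hxt : x ∈ ⨆ i, Q.grading.piece i := by
        rw [Q.grading.isInternal.submodule_iSup_eq_top]; trivial
      refine Submodule.iSup_induction' (motive := fun y _ => lk (a • y) = a • lk y)
        (p := Q.grading.piece) ?_ ?_ ?_ hxt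
      · intro i y hy
        exact hpiece i y hy
      · simp
      · intro y z _ _ hy hz
        rw [smul_add, map_add, hy, hz, map_add, smul_add]
    intro a x
    have hat : a ∈ ⨆ n, ga.piece n := by
      rw [ga.isInternal.submodule_iSup_eq_top]; trivial
    refine Submodule.iSup_induction' (motive := fun b _ => lk (b • x) = b • lk x)
      (p := ga.piece) ?_ ?_ ?_ hat
    · intro n b hb
      exact hhom n b hb x
    · simp
    · intro b c _ _ hb hc
      rw [add_smul, map_add, hb, hc, add_smul]
  refine ⟨{ toFun := lk, map_add' := lk.map_add, map_smul' := hsmul }, ?_, ?_⟩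
  · intro t x hx
    show lk x ∈ M.grading.piece t
    rw [heval t x hx]
    exact mproj_mem M t (l x)
  · apply LinearMap.ext
    intro x
    show g (lk x) = h x
    have hxt : x ∈ ⨆ i, Q.grading.piece i := by
      rw [Q.grading.isInternal.submodule_iSup_eq_top]; trivial
    refine Submodule.iSup_induction' (motive := fun y _ => g (lk y) = h y)
      (p := Q.grading.piece) ?_ ?_ ?_ hxt
    · intro t y hy
      rw [heval t y hy, ← mproj_comm g hg t (l y)]
      have hgl : g (l y) = h y := by
        have := congrArg (fun f : Q.carrier →ₗ[A] N.carrier => f y) hl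
        simpa using this
      rw [hgl]
      exact mproj_eq_of_mem N (hh t y hy)
    · simp
    · intro y z _ _ hy hz
      rw [map_add, map_add, hy, hz, map_add]

theorem grProjective_of_projective (Q : GrMod k ga)
    (hproj : Module.Projective A Q.carrier) : IsGrProjective k Q := by
  intro M N g hg hgsurj h hh
  obtain ⟨l, hl⟩ := Module.projective_lifting_property g h hgsurj
  exact homogenize g hg h hh l hl

end GrModAux

section Jac
variable {B : Type} [Ring B]

lemma jac_left_inv {r : B} (hr : r ∈ Ideal.jacobson (⊥ : Ideal B)) :
    ∃ z : B, z * (1 - r) = 1 := by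
  obtain ⟨z, hz⟩ := Ideal.mem_jacobson_iff.1 hr (-1)
  refine ⟨z, ?_⟩
  rw [Ideal.mem_bot, sub_eq_zero] at hz
  have h1 : z * (1 - r) = z * -1 * r + z := by noncomm_ring
  rw [h1, hz]

lemma jac_isUnit {r : B} (hr : r ∈ Ideal.jacobson (⊥ : Ideal B)) : IsUnit (1 - r) := by
  obtain ⟨z, hz⟩ := jac_left_inv hr
  have hzr : -(z * r) ∈ Ideal.jacobson (⊥ : Ideal B) :=
    neg_mem (Ideal.mul_mem_left _ z hr)
  have hexp : z - z * r = 1 := by rw [← hz]; noncomm_ring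
  have hz1 : 1 - -(z * r) = z := by rw [sub_neg_eq_add, ← hexp]; noncomm_ring
  obtain ⟨w, hw⟩ := jac_left_inv hzr
  rw [hz1] at hw
  have hw' : w = 1 - r := by
    calc w = w * (z * (1 - r)) := by rw [hz, mul_one]
    _ = w * z * (1 - r) := by rw [mul_assoc]
    _ = 1 - r := by rw [hw, one_mul]
  refine ⟨⟨1 - r, z, ?_, hz⟩, rfl⟩
  rw [← hw']
  exact hw

lemma jac_mul_right {r b : B} (hr : r ∈ Ideal.jacobson (⊥ : Ideal B)) :
    r * b ∈ Ideal.jacobson (⊥ : Ideal B) := by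
  rw [Ideal.jacobson, Ideal.mem_sInf]
  rintro m ⟨-, hmax⟩
  by_cases hb : b ∈ m
  · exact Ideal.mul_mem_left m r hb
  · set f : B →ₗ[B] B := LinearMap.toSpanSingleton B B b with hf
    set m' : Ideal B := Submodule.comap f m with hm'
    have hm'max : m'.IsMaximal := by
      constructor
      constructor
      · intro htop
        apply hb
        have h1 : (1 : B) ∈ m' := htop ▸ Submodule.mem_top
        simpa [hm', hf, LinearMap.toSpanSingleton_apply] using h1
      · intro I hI
        obtain ⟨c, hcI, hcm'⟩ := SetLike.exists_of_lt hI
        have hcb : c * b ∉ m := by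
          intro hc
          exact hcm' (by simpa [hm', hf, LinearMap.toSpanSingleton_apply, smul_eq_mul] using hc)
        have hlt : m < m ⊔ Ideal.span {c * b} := by
          refine lt_of_le_of_ne le_sup_left ?_
          intro heq
          apply hcb
          have hmem : c * b ∈ m ⊔ Ideal.span {c * b} :=
            Submodule.mem_sup_right (Ideal.subset_span rfl)
          rwa [← heq] at hmem
        have hsup : m ⊔ Ideal.span {c * b} = ⊤ := hmax.1.2 _ hlt
        have hbmem : b ∈ m ⊔ Ideal.span {c * b} := hsup ▸ Submodule.mem_top
        obtain ⟨x, hx, y, hy, hxy⟩ := Submodule.mem_sup.1 hbmem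
        obtain ⟨d, hd⟩ := Submodule.mem_span_singleton.1 hy
        have hkey : (1 - d * c) * b = x := by
          have hexp : (1 - d * c) * b = b - d * (c * b) := by noncomm_ring
          rw [smul_eq_mul] at hd
          rw [hexp, hd, ← hxy]
          abel
        have h1m' : (1 - d * c) ∈ m' := by
          simp only [hm', Submodule.mem_comap, hf, LinearMap.toSpanSingleton_apply,
            smul_eq_mul]
          rw [hkey]; exact hx
        have h1 : (1 : B) ∈ I := by
          have hdc : d * c ∈ I := Ideal.mul_mem_left I d hcI
          have hsum : (1 - d * c) + d * c ∈ I := I.add_mem (le_of_lt hI h1m') hdc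
          simpa using hsum
        exact (Ideal.eq_top_iff_one I).2 h1
    have hr' := (Ideal.mem_sInf.1 hr) (I := m') ⟨bot_le, hm'max⟩
    simpa [hm', hf, LinearMap.toSpanSingleton_apply, smul_eq_mul] using hr'

end Jac

section Nak
variable {B : Type} [Ring B] {M : Type} [AddCommGroup M] [Module B M]

lemma rep_coeff (W : Submodule B M) (s : Finset M) (hspan : Submodule.span B ↑s = W)
    {x : M}
    (hx : x ∈ Submodule.span B {z : M | ∃ r ∈ Ideal.jacobson (⊥ : Ideal B), ∃ v ∈ W, z = r • v}) :
    ∃ c : M → B, (∀ y, c y ∈ Ideal.jacobson (⊥ : Ideal B)) ∧ x = ∑ y ∈ s, c y • y := by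
  classical
  refine Submodule.span_induction ?_ ?_ ?_ ?_ hx
  · rintro z ⟨r, hr, v, hv, rfl⟩
    have hvs : v ∈ Submodule.span B (↑s : Set M) := hspan ▸ hv
    obtain ⟨f, -, hf⟩ := Submodule.mem_span_finset.1 hvs
    refine ⟨fun y => r * f y, fun y => jac_mul_right hr, ?_⟩
    rw [← hf, Finset.smul_sum]
    exact Finset.sum_congr rfl fun y _ => (smul_smul r (f y) y)
  · exact ⟨0, fun y => zero_mem _, by simp⟩
  · rintro z w - - ⟨c₁, hc₁, rfl⟩ ⟨c₂, hc₂, rfl⟩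
    exact ⟨c₁ + c₂, fun y => add_mem (hc₁ y) (hc₂ y), by
      rw [← Finset.sum_add_distrib]
      exact Finset.sum_congr rfl fun y _ => by rw [Pi.add_apply, add_smul]⟩
  · rintro b z - ⟨c, hc, rfl⟩
    exact ⟨fun y => b * c y, fun y => Ideal.mul_mem_left _ b (hc y), by
      rw [Finset.smul_sum]
      exact Finset.sum_congr rfl fun y _ => by rw [smul_smul]⟩

lemma nakayama (W : Submodule B M)
    (hW : W ≤ Submodule.span B {z : M | ∃ r ∈ Ideal.jacobson (⊥ : Ideal B), ∃ v ∈ W, z = r • v})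
    (hfg : ∃ s : Finset M, Submodule.span B ↑s = W) : W = ⊥ := by
  classical
  obtain ⟨s, hs⟩ := hfg
  suffices hclaim : ∀ (n : ℕ) (t : Finset M), t.card ≤ n → Submodule.span B ↑t = W → W = ⊥ by
    exact hclaim s.card s le_rfl hs
  intro n
  induction n with
  | zero =>
    intro t ht hspan
    rw [Finset.card_eq_zero.1 (Nat.le_zero.1 ht)] at hspan
    simpa using hspan.symm
  | succ n ih =>
    intro t ht hspan
    rcases t.eq_empty_or_nonempty with he | ⟨x, hx⟩
    · rw [he] at hspan
      simpa using hspan.symm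
    · have hxW : x ∈ W := by
        rw [← hspan]
        exact Submodule.subset_span (by exact_mod_cast hx)
      obtain ⟨c, hcJ, hrep⟩ := rep_coeff W t hspan (hW hxW)
      have hsum : x = c x • x + ∑ y ∈ t.erase x, c y • y := by
        conv_lhs => rw [hrep]
        exact (Finset.add_sum_erase _ _ hx).symm
      have hsplit : (1 - c x) • x = ∑ y ∈ t.erase x, c y • y := by
        rw [sub_smul, one_smul]
        nth_rewrite 1 [hsum]
        abel
      have hu : IsUnit (1 - c x) := jac_isUnit (hcJ x)
      obtain ⟨u, hu'⟩ := hu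
      have hmem2 : ((1 - c x) • x) ∈ Submodule.span B ↑(t.erase x) := by
        rw [hsplit]
        exact Submodule.sum_mem _ fun y hy =>
          Submodule.smul_mem _ _ (Submodule.subset_span (by exact_mod_cast hy))
      have hxspan : x ∈ Submodule.span B ↑(t.erase x) := by
        have h3 := Submodule.smul_mem _ ((↑u⁻¹ : B)) hmem2
        rwa [← hu', smul_smul, u.inv_mul, one_smul] at h3
      have hspan' : Submodule.span B ↑(t.erase x) = W := by
        apply le_antisymm
        · rw [← hspan]
          exact Submodule.span_mono (by exact_mod_cast t.erase_subset x)
        · rw [← hspan]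
          rw [Submodule.span_le]
          intro y hy
          rcases eq_or_ne y x with rfl | hne
          · exact hxspan
          · exact Submodule.subset_span (Finset.mem_coe.2 (Finset.mem_erase.2 ⟨hne, by exact_mod_cast hy⟩))
      exact ih (t.erase x) (by have := Finset.card_erase_lt_of_mem hx; omega) hspan'

end Nak

section Chain
variable {B : Type} [Ring B] {M : Type} [AddCommGroup M] [Module B M]

def Tchain (B : Type) [Ring B] (M : Type) [AddCommGroup M] [Module B M] :
    ℕ → Submodule B M
  | 0 => ⊤
  | n+1 => Submodule.span B
      {z : M | ∃ r ∈ Ideal.jacobson (⊥ : Ideal B), ∃ v ∈ Tchain B M n, z = r • v}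

lemma Tchain_dec : ∀ n, Tchain B M (n + 1) ≤ Tchain B M n := by
  intro n
  induction n with
  | zero => exact le_top
  | succ n ih =>
    show Submodule.span B _ ≤ Submodule.span B _
    apply Submodule.span_mono
    rintro z ⟨r, hr, v, hv, rfl⟩
    exact ⟨r, hr, v, ih hv, rfl⟩

lemma eq_top_of_sup_small (k : Type) [Field k] [SMul k B] [Module k M]
    [IsScalarTower k B M] [FiniteDimensional k M] (N : Submodule B M)
    (h : (⊤ : Submodule B M) ≤ N ⊔ Tchain B M 1) : N = ⊤ := by
  have hsup : ∀ n, (⊤ : Submodule B M) ≤ N ⊔ Tchain B M (n + 1) := by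
    intro n
    induction n with
    | zero => exact h
    | succ n ih =>
      refine le_trans h (sup_le le_sup_left ?_)
      show Submodule.span B _ ≤ _
      rw [Submodule.span_le]
      rintro z ⟨r, hr, v, -, rfl⟩
      have hv2 : v ∈ N ⊔ Tchain B M (n + 1) := ih Submodule.mem_top
      obtain ⟨u, hu, w, hw, rfl⟩ := Submodule.mem_sup.1 hv2
      rw [smul_add]
      exact Submodule.add_mem _ (Submodule.mem_sup_left (N.smul_mem r hu))
        (Submodule.mem_sup_right (Submodule.subset_span ⟨r, hr, w, hw, rfl⟩))
  have hstab : ∃ n, Tchain B M (n + 1) = Tchain B M n := by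
    by_contra hc
    push_neg at hc
    have hlt : ∀ n, Module.finrank k (Submodule.restrictScalars k (Tchain B M (n + 1))) <
        Module.finrank k (Submodule.restrictScalars k (Tchain B M n)) := by
      intro n
      apply Submodule.finrank_lt_finrank_of_lt
      refine lt_of_le_of_ne (fun x hx => Tchain_dec n hx) ?_
      intro he
      exact hc n (by
        apply SetLike.ext
        intro x
        constructor
        · intro hx
          exact (he ▸ (show x ∈ Submodule.restrictScalars k (Tchain B M (n+1)) from hx) :)
        · intro hx
          exact (he.symm ▸ (show x ∈ Submodule.restrictScalars k (Tchain B M n) from hx) :))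
    have hbound : ∀ n, Module.finrank k (Submodule.restrictScalars k (Tchain B M n)) + n ≤
        Module.finrank k (Submodule.restrictScalars k (Tchain B M 0)) := by
      intro n
      induction n with
      | zero => simp
      | succ n ih =>
        have := hlt n
        omega
    have := hbound (Module.finrank k (Submodule.restrictScalars k (Tchain B M 0)) + 1)
    omega
  obtain ⟨n, hn⟩ := hstab
  have hbot : Tchain B M n = ⊥ := by
    apply nakayama
    · exact le_of_eq hn.symm
    · have hWfg : (Submodule.restrictScalars k (Tchain B M n)).FG :=
        IsNoetherian.noetherian _
      obtain ⟨S, hS⟩ := hWfg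
      refine ⟨S, le_antisymm ?_ ?_⟩
      · rw [Submodule.span_le]
        intro y hy
        exact (hS ▸ Submodule.subset_span hy :)
      · intro x hx
        have h1 : x ∈ Submodule.span k (↑S : Set M) := by rw [hS]; exact hx
        exact (Submodule.span_le.2 (fun y hy => Submodule.subset_span hy) :
          Submodule.span k (↑S : Set M) ≤ Submodule.restrictScalars k (Submodule.span B ↑S)) h1
  have hfin := hsup n
  rw [hn, hbot, sup_bot_eq] at hfin
  exact eq_top_iff.2 hfin

end Chain


section GFree
variable {k : Type} [Field k] {B : Type} [Ring B] [Algebra k B] {gb : PosGrading k B}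

def pzDef (gb : PosGrading k B) : ℤ → Submodule k B :=
  fun j => if 0 ≤ j then gb.piece j.toNat else ⊥

lemma pzDef_nonneg (gb : PosGrading k B) (n : ℕ) : pzDef gb (n : ℤ) = gb.piece n := by
  simp [pzDef]

lemma pzDef_neg (gb : PosGrading k B) {j : ℤ} (h : j < 0) : pzDef gb j = ⊥ := by
  rw [pzDef, if_neg (by omega)]

lemma pzDef_toNat (gb : PosGrading k B) {j : ℤ} (h : 0 ≤ j) :
    pzDef gb j = gb.piece j.toNat := by
  rw [pzDef, if_pos h]

theorem projective_of_grProjective [FiniteDimensional k B] (R : GrMod k gb)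
    (hR : IsGrProjective k R) :
    Module.Projective B R.carrier := by
  classical
  set bR := Module.finBasis k R.carrier with hbR
  choose s hs1 hs2 using fun bb => mproj_finset R (bR bb)
  set ι := (bb : Fin (Module.finrank k R.carrier)) × {i : ℤ // i ∈ s bb} with hι
  set d : ι → ℤ := fun x => x.2.1 with hd
  set e : ι → R.carrier := fun x => mproj R (x.2.1) (bR x.1) with he
  have hemem : ∀ x : ι, e x ∈ R.grading.piece (d x) := fun x => mproj_mem R _ _
  -- pieces of the free module
  haveI hιfin : Fintype ι := by
    rw [hι]; infer_instance
  set Fp : ℤ → Submodule k (ι → B) := fun t =>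
    ⨅ x : ι, Submodule.comap (LinearMap.proj (R := k) (φ := fun _ : ι => B) x)
      (pzDef gb (t - d x)) with hFp
  have mem_Fp : ∀ (t : ℤ) (f : ι → B), f ∈ Fp t ↔ ∀ x : ι, f x ∈ pzDef gb (t - d x) := by
    intro t f
    simp [hFp, Submodule.mem_iInf, Submodule.mem_comap]
  -- independence of pz
  have hpzind : ∀ j0 : ℤ, Disjoint (pzDef gb j0) (⨆ (j : ℤ) (_ : j ≠ j0), pzDef gb j) := by
    intro j0
    by_cases h0 : 0 ≤ j0
    · have hB := gb.isInternal.submodule_iSupIndep (i := j0.toNat)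
      have hle : (⨆ (j : ℤ) (_ : j ≠ j0), pzDef gb j) ≤ ⨆ (m : ℕ) (_ : m ≠ j0.toNat), gb.piece m := by
        refine iSup₂_le fun j hj => ?_
        by_cases hj0 : 0 ≤ j
        · rw [pzDef_toNat gb hj0]
          exact le_iSup₂ (f := fun (m : ℕ) (_ : m ≠ j0.toNat) => gb.piece m) j.toNat
            (by omega)
        · rw [pzDef_neg gb (show j < 0 by omega)]
          exact bot_le
      rw [pzDef_toNat gb h0]
      exact hB.mono_right hle
    · rw [pzDef_neg gb (show j0 < 0 by omega)]
      exact disjoint_bot_left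
  -- independence of Fp
  have hFind : iSupIndep Fp := by
    intro t
    rw [Submodule.disjoint_def]
    intro f hf1 hf2
    have hcoord : ∀ x : ι, f x ∈ ⨆ (j : ℤ) (_ : j ≠ t - d x), pzDef gb j := by
      intro x
      have hsup_le : (⨆ (t' : ℤ) (_ : t' ≠ t), Fp t') ≤
          Submodule.comap (LinearMap.proj (R := k) (φ := fun _ : ι => B) x)
            (⨆ (j : ℤ) (_ : j ≠ t - d x), pzDef gb j) := by
        refine iSup₂_le fun t' ht' => ?_
        have h1 : Fp t' ≤ Submodule.comap
            (LinearMap.proj (R := k) (φ := fun _ : ι => B) x) (pzDef gb (t' - d x)) :=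
          iInf_le _ x
        refine le_trans h1 (Submodule.comap_mono ?_)
        exact le_iSup₂ (f := fun (j : ℤ) (_ : j ≠ t - d x) => pzDef gb j) (t' - d x) (by omega)
      exact Submodule.mem_comap.1 (hsup_le hf2)
    have hzero : ∀ x : ι, f x = 0 := by
      intro x
      have h1 : f x ∈ pzDef gb (t - d x) := (mem_Fp t f).1 hf1 x
      exact (Submodule.disjoint_def.1 (hpzind (t - d x))) (f x) h1 (hcoord x)
    funext x
    exact hzero x
  -- iSup Fp = ⊤
  have hFsup : (⨆ t : ℤ, Fp t) = ⊤ := by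
    rw [Submodule.eq_top_iff']
    intro f
    have hf : f = ∑ x : ι, Pi.single x (f x) := (Finset.univ_sum_single f).symm
    rw [hf]
    refine Submodule.sum_mem _ fun x _ => ?_
    have hfx : f x ∈ ⨆ n : ℕ, gb.piece n := by
      rw [gb.isInternal.submodule_iSup_eq_top]; trivial
    refine Submodule.iSup_induction' (motive := fun b _ => Pi.single x b ∈ ⨆ t : ℤ, Fp t)
      (p := gb.piece) ?_ ?_ ?_ hfx
    · intro nn b hb
      refine Submodule.mem_iSup_of_mem ((nn : ℤ) + d x) ?_
      rw [mem_Fp]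
      intro y
      by_cases hxy : y = x
      · subst hxy
        rw [Pi.single_eq_same]
        have harith : (nn : ℤ) + d y - d y = (nn : ℤ) := by ring
        rw [harith, pzDef_nonneg gb]
        exact hb
      · rw [Pi.single_eq_of_ne hxy]
        exact zero_mem _
    · simp
    · intro b c _ _ hbm hcm
      rw [Pi.single_add]
      exact Submodule.add_mem _ hbm hcm
  have hFint : DirectSum.IsInternal Fp :=
    (DirectSum.isInternal_submodule_iff_iSupIndep_and_iSup_eq_top Fp).2 ⟨hFind, hFsup⟩
  -- the graded free module
  set Fgr : GrMod k gb :=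
    { carrier := ι → B
      fin := by infer_instance
      grading :=
        { piece := Fp
          isInternal := hFint
          smul_mem := by
            intro i j a f ha hf
            rw [mem_Fp]
            intro x
            have hfx : f x ∈ pzDef gb (j - d x) := (mem_Fp j f).1 hf x
            show a • f x ∈ pzDef gb ((i : ℤ) + j - d x)
            by_cases hneg : j - d x < 0
            · rw [pzDef_neg gb hneg] at hfx
              have : f x = 0 := by simpa using hfx
              rw [this, smul_zero]
              exact zero_mem _
            · have h1 : f x ∈ gb.piece (j - d x).toNat := by
                rwa [pzDef_toNat gb (show (0:ℤ) ≤ j - d x by omega)] at hfx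
              have h2 : a * f x ∈ gb.piece (i + (j - d x).toNat) := gb.mul_mem ha h1
              have h3 : ((i : ℤ) + j - d x) = ((i + (j - d x).toNat : ℕ) : ℤ) := by
                push_cast
                omega
              rw [h3, pzDef_nonneg gb]
              rw [smul_eq_mul]
              exact h2 } } with hFgr
  -- the surjection q
  set q : (ι → B) →ₗ[B] R.carrier :=
    { toFun := fun f => ∑ x : ι, f x • e x
      map_add' := by
        intro f g
        rw [← Finset.sum_add_distrib]
        exact Finset.sum_congr rfl fun x _ => by rw [Pi.add_apply, add_smul]
      map_smul' := by
        intro b f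
        rw [RingHom.id_apply, Finset.smul_sum]
        exact Finset.sum_congr rfl fun x _ => by
          rw [Pi.smul_apply, smul_eq_mul, mul_smul] } with hq
  have hq_apply : ∀ f : ι → B, q f = ∑ x : ι, f x • e x := fun f => rfl
  have hqgr : IsGradedMap k Fgr.grading R.grading q := by
    intro t f hf
    rw [hq_apply]
    refine Submodule.sum_mem _ fun x _ => ?_
    have hfx : f x ∈ pzDef gb (t - d x) := (mem_Fp t f).1 hf x
    by_cases hneg : t - d x < 0
    · rw [pzDef_neg gb hneg] at hfx
      have : f x = 0 := by simpa using hfx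
      rw [this, zero_smul]
      exact zero_mem _
    · have h1 : f x ∈ gb.piece (t - d x).toNat := by
        rwa [pzDef_toNat gb (show (0:ℤ) ≤ t - d x by omega)] at hfx
      have h2 : f x • e x ∈ R.grading.piece (((t - d x).toNat : ℤ) + d x) :=
        R.grading.smul_mem h1 (hemem x)
      have h3 : (((t - d x).toNat : ℤ) + d x) = t := by omega
      rw [h3] at h2
      exact h2
  have hq_single : ∀ x : ι, q (Pi.single x (1 : B)) = e x := by
    intro x
    rw [hq_apply]
    rw [Finset.sum_eq_single x]
    · rw [Pi.single_eq_same, one_smul]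
    · intro y _ hyx
      rw [Pi.single_eq_of_ne hyx, zero_smul]
    · intro hx
      exact absurd (Finset.mem_univ x) hx
  have hspan : Submodule.span B (Set.range e) = ⊤ := by
    rw [eq_top_iff]
    intro z _
    have hbmem : ∀ bb, bR bb ∈ Submodule.span B (Set.range e) := by
      intro bb
      rw [← hs2 bb]
      refine Submodule.sum_mem _ fun i hi => ?_
      exact Submodule.subset_span ⟨⟨bb, ⟨i, hi⟩⟩, rfl⟩
    have hz : z ∈ Submodule.span k (Set.range bR) := by
      rw [bR.span_eq]; trivial
    have hle : Submodule.span k (Set.range bR) ≤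
        Submodule.restrictScalars k (Submodule.span B (Set.range e)) := by
      rw [Submodule.span_le]
      rintro _ ⟨bb, rfl⟩
      exact hbmem bb
    exact hle hz
  have hqsurj : Function.Surjective q := by
    rw [← LinearMap.range_eq_top]
    rw [eq_top_iff, ← hspan, Submodule.span_le]
    rintro _ ⟨x, rfl⟩
    exact ⟨Pi.single x 1, hq_single x⟩
  obtain ⟨l, hlg, hl⟩ := hR Fgr R q hqgr hqsurj LinearMap.id (fun i x hx => hx)
  exact Module.Projective.of_split l q hl

end GFree

end Stmt5Aux
end

noncomputable section

variable (k A B : Type) [Field k] [Ring A] [Algebra k A] [FiniteDimensional k A]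
  [Ring B] [Algebra k B] [FiniteDimensional k B]
  (ga : PosGrading k A) (gb : PosGrading k B)

variable (φ : A →ₐ[k] B) (hφ : IsGradedAlgHom k ga gb φ)

/-- Under the hypotheses above, the projective cover `R` of `N'` in graded
`B`-modules restricts to a projective object in graded `a`-modules. -/
theorem stmt5 (htight : IsTight k gb φ)
    (N' : GrMod k gb) (m : ℤ)
    (hsemi : IsSemilinearOfDegree k (GrMod.res k φ hφ N') m)
    (P : Type) [AddCommGroup P] [Module k P] [Module B P] [IsScalarTower k B P]
    [FiniteDimensional k P]
    (hPB : Module.Projective B P)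
    (hPA : @Module.Projective A _ P _ (Module.compHom P φ.toRingHom))
    (σ : P →ₗ[B] N'.carrier) (hσ : Function.Surjective σ)
    (R : GrMod k gb) (ρ : R.carrier →ₗ[B] N'.carrier)
    (hcover : IsGrProjCover k R N' ρ) :
    IsGrProjective k (GrMod.res k φ hφ R) := by
  classical
  obtain ⟨hρg, hρsurj, hRproj, hsmall⟩ := hcover
  -- R is projective as an (ungraded) B-module
  have hRB : Module.Projective B R.carrier := Stmt5Aux.projective_of_grProjective R hRproj
  -- lift σ through ρ using projectivity of P
  haveI := hPB
  obtain ⟨τ, hτ⟩ := Module.projective_lifting_property ρ σ hρsurj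
  -- τ is surjective by a Nakayama argument
  have hτsurj : Function.Surjective τ := by
    have htop : (⊤ : Submodule B R.carrier) ≤
        LinearMap.range τ ⊔ Stmt5Aux.Tchain B R.carrier 1 := by
      intro y _
      obtain ⟨p, hp⟩ := hσ (ρ y)
      have hcomp : ρ (τ p) = σ p := LinearMap.congr_fun hτ p
      have hker : y - τ p ∈ LinearMap.ker ρ := by
        rw [LinearMap.mem_ker, map_sub, hcomp, hp, sub_self]
      have h1 : y - τ p ∈ Stmt5Aux.Tchain B R.carrier 1 := by
        show y - τ p ∈ Submodule.span B
          {z : R.carrier | ∃ r ∈ Ideal.jacobson (⊥ : Ideal B),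
            ∃ v ∈ (⊤ : Submodule B R.carrier), z = r • v}
        have h2 := hsmall _ hker
        refine Submodule.span_mono ?_ h2
        rintro z ⟨r, hr, v, hzv⟩
        exact ⟨r, hr, v, Submodule.mem_top, hzv⟩
      have hy : y = τ p + (y - τ p) := by abel
      rw [hy]
      exact Submodule.add_mem _ (Submodule.mem_sup_left ⟨p, rfl⟩)
        (Submodule.mem_sup_right h1)
    have := Stmt5Aux.eq_top_of_sup_small k (LinearMap.range τ) htop
    rwa [← LinearMap.range_eq_top]
  -- split τ using projectivity of R over B
  haveI := hRB
  obtain ⟨sp, hsp⟩ := Module.projective_lifting_property τ (LinearMap.id) hτsurj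
  -- pass to A-module structures
  letI : Module A P := Module.compHom P φ.toRingHom
  letI : Module A R.carrier := Module.compHom R.carrier φ.toRingHom
  haveI hPA' : Module.Projective A P := hPA
  set τA : P →ₗ[A] R.carrier :=
    { toFun := τ
      map_add' := τ.map_add
      map_smul' := fun a x => τ.map_smul (φ a) x } with hτA
  set spA : R.carrier →ₗ[A] P :=
    { toFun := sp
      map_add' := sp.map_add
      map_smul' := fun a x => sp.map_smul (φ a) x } with hspA
  have hRA : Module.Projective A R.carrier := by
    refine Module.Projective.of_split spA τA ?_
    apply LinearMap.ext
    intro x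
    exact LinearMap.congr_fun hsp x
  exact Stmt5Aux.grProjective_of_projective (GrMod.res k φ hφ R) hRA

end
end
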